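/- arXiv:0811.3227 — 7 statements merged into one kernel-verified Lean document; each statement's English description precedes it below -/
import Mathlib

section
/- Let (X,d) be a compact metric space, f : X → X a continuous surjective map, ε > 0, and φ : X → ℝ continuous. If Y = ⋃_{j∈J} Y_j is a finite or countable union of subsets of X, then P⁻_f(φ, Y, ε) = sup_{j∈J} P⁻_f(φ, Y_j, ε) and P⁻_f(φ, Y) = sup_{j∈J} P⁻_f(φ, Y_j). -/
open Filter Set Function
open scoped ENNReal NNReal BigOperators

variable {X : Type*} [MetricSpace X]

/-- A finite prehistory (branch of consecutive preimages) for `f`: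
`pts 0` is the base point and `pts (i+1)` is a preimage of `pts i` for `i < len`. -/
structure Prehistory (f : X → X) where
  len : ℕ
  pts : ℕ → X
  isPre : ∀ i < len, f (pts (i + 1)) = pts i

namespace Prehistory

variable {f : X → X}

/-- The set `X(C, ε)` of points `ε`-shadowed (in backward time) by the prehistory `C`. -/
def shadow (C : Prehistory f) (ε : ℝ) : Set X :=
  {z | ∃ zs : ℕ → X, zs 0 = z ∧ (∀ i < C.len, f (zs (i + 1)) = zs i) ∧
    ∀ i ≤ C.len, dist (zs i) (C.pts i) < ε}

/-- The consecutive sum `S⁻_{n(C)} φ (C) = φ(y) + φ(y₋₁) + ⋯ + φ(y₋ₘ)`. -/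
noncomputable def consSum (C : Prehistory f) (φ : X → ℝ) : ℝ :=
  ∑ i ∈ Finset.range (C.len + 1), φ (C.pts i)

end Prehistory

/-- `Γ` `ε`-covers `Y` if `Y ⊆ ⋃_{C ∈ Γ} X(C, ε)`. -/
def ECovers {f : X → X} (Γ : Set (Prehistory f)) (Y : Set X) (ε : ℝ) : Prop :=
  Y ⊆ ⋃ C ∈ Γ, C.shadow ε

/-- `M⁻_f(λ, φ, Y, N, ε)`. -/
noncomputable def invM (f : X → X) (lam : ℝ) (φ : X → ℝ) (Y : Set X) (N : ℕ) (ε : ℝ) :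
    ℝ≥0∞ :=
  ⨅ (Γ : Set (Prehistory f)) (_ : ECovers Γ Y ε ∧ ∀ C ∈ Γ, N ≤ C.len),
    ∑' C : Γ, ENNReal.ofReal (Real.exp (-lam * (C.1.len : ℝ) + C.1.consSum φ))

/-- `M⁻_f(λ, φ, Y, ε) = lim_{N → ∞} M⁻_f(λ, φ, Y, N, ε)`; the quantity is nondecreasing
in `N`, so the limit is the supremum. -/
noncomputable def invMLim (f : X → X) (lam : ℝ) (φ : X → ℝ) (Y : Set X) (ε : ℝ) : ℝ≥0∞ :=
  ⨆ N : ℕ, invM f lam φ Y N ε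

/-- The `ε`-inverse pressure `P⁻_f(φ, Y, ε) = inf {λ : M⁻_f(λ, φ, Y, ε) = 0}`. -/
noncomputable def invPressEps (f : X → X) (φ : X → ℝ) (Y : Set X) (ε : ℝ) : EReal :=
  sInf {l : EReal | ∃ lam : ℝ, l = (lam : EReal) ∧ invMLim f lam φ Y ε = 0}

/-- The inverse pressure `P⁻_f(φ, Y) = lim_{ε → 0} P⁻_f(φ, Y, ε)`; the `ε`-inverse
pressure is nonincreasing in `ε`, so the limit is the supremum over `ε > 0`. -/
noncomputable def invPress (f : X → X) (φ : X → ℝ) (Y : Set X) : EReal :=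
  ⨆ (ε : ℝ) (_ : 0 < ε), invPressEps f φ Y ε


section Aux

variable {X : Type*} [MetricSpace X] {f : X → X} {lam lam' : ℝ} {φ : X → ℝ}
  {Y Y' : Set X} {N : ℕ} {ε : ℝ}

lemma invM_mono_set (h : Y ⊆ Y') : invM f lam φ Y N ε ≤ invM f lam φ Y' N ε :=
  le_iInf₂ fun Γ hΓ => iInf₂_le Γ ⟨h.trans hΓ.1, hΓ.2⟩

lemma invMLim_mono_set (h : Y ⊆ Y') : invMLim f lam φ Y ε ≤ invMLim f lam φ Y' ε :=
  iSup_mono fun _ => invM_mono_set h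

lemma invM_anti_lam (h : lam' ≤ lam) : invM f lam φ Y N ε ≤ invM f lam' φ Y N ε := by
  refine le_iInf₂ fun Γ hΓ => (iInf₂_le Γ hΓ).trans (ENNReal.tsum_le_tsum fun C => ?_)
  refine ENNReal.ofReal_le_ofReal (Real.exp_le_exp.2 (add_le_add_left ?_ _))
  exact mul_le_mul_of_nonneg_right (neg_le_neg h) (Nat.cast_nonneg _)

lemma invMLim_anti_lam (h : lam' ≤ lam) : invMLim f lam φ Y ε ≤ invMLim f lam' φ Y ε :=
  iSup_mono fun _ => invM_anti_lam h

lemma invPressEps_mono_set (h : Y ⊆ Y') :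
    invPressEps f φ Y ε ≤ invPressEps f φ Y' ε := by
  refine sInf_le_sInf fun l hl => ?_
  obtain ⟨lam, rfl, h0⟩ := hl
  exact ⟨lam, rfl, le_antisymm (h0 ▸ invMLim_mono_set h) (zero_le)⟩

lemma invPress_mono_set (h : Y ⊆ Y') : invPress f φ Y ≤ invPress f φ Y' :=
  iSup_mono fun _ => iSup_mono fun _ => invPressEps_mono_set h

set_option maxHeartbeats 1000000 in
lemma invM_iUnion_zero {J : Type*} [Countable J] {Ys : J → Set X}
    (h : ∀ j, invM f lam φ (Ys j) N ε = 0) : invM f lam φ (⋃ j, Ys j) N ε = 0 := by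
  refine le_antisymm ?_ (zero_le)
  have : ∀ δ : ℝ≥0∞, δ ≠ 0 → invM f lam φ (⋃ j, Ys j) N ε ≤ δ := by
    intro δ hδ
    obtain ⟨ε', hε'pos, hε'sum⟩ := ENNReal.exists_pos_sum_of_countable hδ J
    have hex : ∀ j, ∃ Γ : Set (Prehistory f),
        (ECovers Γ (Ys j) ε ∧ ∀ C ∈ Γ, N ≤ C.len) ∧
        (∑' C : Γ, ENNReal.ofReal (Real.exp (-lam * (C.1.len : ℝ) + C.1.consSum φ)))
          ≤ (ε' j : ℝ≥0∞) := by
      intro j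
      have hlt : invM f lam φ (Ys j) N ε < (ε' j : ℝ≥0∞) := by
        rw [h j]; exact_mod_cast hε'pos j
      rw [invM, iInf_lt_iff] at hlt
      obtain ⟨Γ, hΓ⟩ := hlt
      rw [iInf_lt_iff] at hΓ
      obtain ⟨hP, hlt'⟩ := hΓ
      exact ⟨Γ, hP, hlt'.le⟩
    choose Γs hΓs hsum using hex
    have hcover : ECovers (⋃ j, Γs j) (⋃ j, Ys j) ε := by
      intro x hx
      obtain ⟨j, hj⟩ := Set.mem_iUnion.1 hx
      obtain ⟨C, hC, hxC⟩ := Set.mem_iUnion₂.1 ((hΓs j).1 hj)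
      exact Set.mem_iUnion₂.2 ⟨C, Set.mem_iUnion.2 ⟨j, hC⟩, hxC⟩
    have hlen : ∀ C ∈ ⋃ j, Γs j, N ≤ C.len := by
      intro C hC
      obtain ⟨j, hj⟩ := Set.mem_iUnion.1 hC
      exact (hΓs j).2 C hj
    calc invM f lam φ (⋃ j, Ys j) N ε
        ≤ ∑' C : (⋃ j, Γs j : Set (Prehistory f)),
            ENNReal.ofReal (Real.exp (-lam * (C.1.len : ℝ) + C.1.consSum φ)) :=
          iInf₂_le _ ⟨hcover, hlen⟩
      _ ≤ ∑' j, ∑' C : Γs j,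
            ENNReal.ofReal (Real.exp (-lam * (C.1.len : ℝ) + C.1.consSum φ)) :=
          by apply ENNReal.tsum_iUnion_le_tsum
               (fun C => ENNReal.ofReal (Real.exp (-lam * (C.len : ℝ) + C.consSum φ))) Γs
      _ ≤ ∑' j, (ε' j : ℝ≥0∞) := ENNReal.tsum_le_tsum hsum
      _ ≤ δ := hε'sum.le
  by_contra hne
  push_neg at hne
  obtain ⟨c, hc1, hc2⟩ := exists_between hne
  exact absurd (this c hc1.ne') (not_le.2 hc2)

lemma invMLim_iUnion_zero {J : Type*} [Countable J] {Ys : J → Set X}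
    (h : ∀ j, invMLim f lam φ (Ys j) ε = 0) : invMLim f lam φ (⋃ j, Ys j) ε = 0 := by
  refine le_antisymm (iSup_le fun N => le_of_eq (invM_iUnion_zero fun j => ?_)) (zero_le)
  exact le_antisymm (le_trans (le_iSup (fun N => invM f lam φ (Ys j) N ε) N) (h j).le)
    (zero_le)

lemma invPressEps_iUnion {J : Type*} [Countable J] (f : X → X) (φ : X → ℝ)
    (Ys : J → Set X) (ε : ℝ) :
    invPressEps f φ (⋃ j, Ys j) ε = ⨆ j, invPressEps f φ (Ys j) ε := by
  refine le_antisymm ?_ (iSup_le fun j => invPressEps_mono_set (Set.subset_iUnion Ys j))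
  set b := ⨆ j, invPressEps f φ (Ys j) ε with hb
  by_contra hlt
  push_neg at hlt
  obtain ⟨c, hbc, hca⟩ := EReal.lt_iff_exists_real_btwn.1 hlt
  have hc : invMLim f c φ (⋃ j, Ys j) ε = 0 := by
    refine invMLim_iUnion_zero fun j => ?_
    have hj : invPressEps f φ (Ys j) ε < (c : EReal) :=
      lt_of_le_of_lt (le_iSup (fun j => invPressEps f φ (Ys j) ε) j) hbc
    obtain ⟨l, hl, hlc⟩ := sInf_lt_iff.1 hj
    obtain ⟨mu, rfl, hmu⟩ := hl
    have hmuc : mu ≤ c := by exact_mod_cast hlc.le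
    exact le_antisymm (le_trans (invMLim_anti_lam hmuc) hmu.le) (zero_le)
  have hmem : (c : EReal) ∈
      {l : EReal | ∃ lam : ℝ, l = (lam : EReal) ∧ invMLim f lam φ (⋃ j, Ys j) ε = 0} :=
    ⟨c, rfl, hc⟩
  exact absurd (sInf_le hmem) (not_le.2 hca)

end Aux

theorem stmt1 [CompactSpace X] (f : X → X) (hf : Continuous f) (hfs : Surjective f)
    (ε : ℝ) (hε : 0 < ε) (φ : X → ℝ) (hφ : Continuous φ)
    (J : Type*) [Countable J] (Y : J → Set X) :
    invPressEps f φ (⋃ j, Y j) ε = ⨆ j, invPressEps f φ (Y j) ε ∧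
      invPress f φ (⋃ j, Y j) = ⨆ j, invPress f φ (Y j) := by
  constructor
  · exact invPressEps_iUnion f φ Y ε
  · refine le_antisymm ?_ (iSup_le fun j => invPress_mono_set (Set.subset_iUnion Y j))
    refine iSup₂_le fun δ hδ => ?_
    rw [invPressEps_iUnion]
    exact iSup_le fun j => le_iSup_of_le j
      (le_iSup₂_of_le δ hδ le_rfl)
end

section
/- Let (X,d) be a compact metric space and f : X → X a homeomorphism. Then for every continuous φ : X → ℝ, the inverse pressure equals the classical topological pressure: P⁻_f(φ, X) = P_f(φ). -/
open Filter Set Function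
open scoped ENNReal NNReal BigOperators

variable {X : Type*} [MetricSpace X]

/-- The `n`-th Birkhoff sum `S_n φ (x) = φ(x) + φ(f x) + ⋯ + φ(f^{n-1} x)`. -/
noncomputable def birkhoff (f : X → X) (φ : X → ℝ) (n : ℕ) (x : X) : ℝ :=
  ∑ i ∈ Finset.range n, φ (f^[i] x)

/-- `E` is an `(n, ε)`-separated set for `f`. -/
def IsSeparatedSet (f : X → X) (n : ℕ) (ε : ℝ) (E : Finset X) : Prop :=
  ∀ x ∈ E, ∀ y ∈ E, x ≠ y → ∃ j < n, ε < dist (f^[j] x) (f^[j] y)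

/-- The supremum of `Σ_{x ∈ E} exp (S_n φ (x))` over `(n, ε)`-separated sets `E`. -/
noncomputable def sepSum (f : X → X) (φ : X → ℝ) (n : ℕ) (ε : ℝ) : ℝ≥0∞ :=
  ⨆ (E : Finset X) (_ : IsSeparatedSet f n ε E),
    ∑ x ∈ E, ENNReal.ofReal (Real.exp (birkhoff f φ n x))

/-- The classical (forward) topological pressure
`P_f(φ) = lim_{ε → 0} limsup_{n → ∞} (1/n) log sup {Σ_{x ∈ E} exp (S_n φ x)}`;
the inner quantity is nonincreasing in `ε`, so the limit is the supremum over `ε > 0`. -/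
noncomputable def topPress (f : X → X) (φ : X → ℝ) : EReal :=
  ⨆ (ε : ℝ) (_ : 0 < ε),
    Filter.limsup (fun n : ℕ => (((n : ℝ)⁻¹ : ℝ) : EReal) * ENNReal.log (sepSum f φ n ε))
      Filter.atTop

section Aux

variable (f : X ≃ₜ X) (φ : X → ℝ)

lemma birkhoff_eq (n x) : birkhoff (⇑f.symm) φ n x = birkhoffSum (⇑f.symm) φ n x := rfl

lemma pts_eq (C : Prehistory ⇑f) : ∀ i ≤ C.len, C.pts i = (⇑f.symm)^[i] (C.pts 0) := by
  intro i
  induction i with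
  | zero => simp
  | succ i ih =>
    intro hi
    have h1 : f (C.pts (i+1)) = C.pts i := C.isPre i (by omega)
    have h2 : C.pts (i+1) = f.symm (C.pts i) := by
      rw [← h1, f.symm_apply_apply]
    rw [h2, ih (by omega), Function.iterate_succ_apply']

lemma mem_shadow_iff (C : Prehistory ⇑f) (ε : ℝ) (z : X) :
    z ∈ C.shadow ε ↔ ∀ i ≤ C.len, dist ((⇑f.symm)^[i] z) (C.pts i) < ε := by
  constructor
  · rintro ⟨zs, hz0, hpre, hdist⟩
    have key : ∀ i ≤ C.len, zs i = (⇑f.symm)^[i] z := by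
      intro i
      induction i with
      | zero => simp [hz0]
      | succ i ih =>
        intro hi
        have h2 : zs (i+1) = f.symm (zs i) := by
          rw [← hpre i (by omega), f.symm_apply_apply]
        rw [h2, ih (by omega), Function.iterate_succ_apply']
    intro i hi
    rw [← key i hi]; exact hdist i hi
  · intro h
    refine ⟨fun i => (⇑f.symm)^[i] z, by simp, fun i _ => ?_, h⟩
    show f ((⇑f.symm)^[i+1] z) = (⇑f.symm)^[i] z
    rw [Function.iterate_succ_apply']
    exact f.apply_symm_apply _

lemma shadow_isOpen (C : Prehistory ⇑f) (ε : ℝ) : IsOpen (C.shadow ε) := by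
  have : C.shadow ε = ⋂ i ∈ Set.Iic C.len, ((⇑f.symm)^[i]) ⁻¹' Metric.ball (C.pts i) ε := by
    ext z
    simp [mem_shadow_iff, Metric.mem_ball]
  rw [this]
  exact (Set.finite_Iic _).isOpen_biInter fun i _ =>
    (Metric.isOpen_ball).preimage (f.symm.continuous.iterate i)

lemma consSum_eq (C : Prehistory ⇑f) :
    C.consSum φ = birkhoff (⇑f.symm) φ (C.len + 1) (C.pts 0) := by
  unfold Prehistory.consSum birkhoff
  refine Finset.sum_congr rfl fun i hi => ?_
  rw [pts_eq f C i (by simpa [Nat.lt_succ_iff] using hi)]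

/-- The canonical prehistory of length `m` over `y`. -/
def mkPre (y : X) (m : ℕ) : Prehistory ⇑f :=
  ⟨m, fun i => (⇑f.symm)^[i] y, fun i _ => by
    show f ((⇑f.symm)^[i+1] y) = (⇑f.symm)^[i] y
    rw [Function.iterate_succ_apply']; exact f.apply_symm_apply _⟩

@[simp] lemma mkPre_len (y m) : (mkPre f y m).len = m := rfl
@[simp] lemma mkPre_pts (y m i) : (mkPre f y m).pts i = (⇑f.symm)^[i] y := rfl

lemma mkPre_consSum (y m) : (mkPre f y m).consSum φ = birkhoff (⇑f.symm) φ (m + 1) y := by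
  rw [consSum_eq]; rfl

lemma symm_iterate_iterate (x : X) : ∀ i m, i ≤ m → (⇑f.symm)^[i] ((⇑f)^[m] x) = (⇑f)^[m - i] x := by
  intro i
  induction i with
  | zero => simp
  | succ i ih =>
    intro m hi
    rw [Function.iterate_succ_apply', ih m (by omega)]
    have : m - i = (m - (i+1)) + 1 := by omega
    rw [this, Function.iterate_succ_apply']
    exact f.symm_apply_apply _

end Aux
section Aux2

variable (f : X ≃ₜ X) (φ : X → ℝ)

lemma birkhoff_symm_iterate (n : ℕ) (x : X) :
    birkhoff (⇑f.symm) φ n ((⇑f)^[n - 1] x) = birkhoff (⇑f) φ n x := by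
  unfold birkhoff
  have h1 : ∀ i ∈ Finset.range n, φ ((⇑f.symm)^[i] ((⇑f)^[n-1] x)) = φ ((⇑f)^[n - 1 - i] x) := by
    intro i hi
    rw [symm_iterate_iterate f x i (n-1) (by simp at hi; omega)]
  rw [Finset.sum_congr rfl h1]
  exact Finset.sum_range_reflect (fun j => φ ((⇑f)^[j] x)) n

lemma sepSum_symm_le (n : ℕ) (ε : ℝ) : sepSum (⇑f) φ n ε ≤ sepSum (⇑f.symm) φ n ε := by
  classical
  cases n with
  | zero =>
    refine iSup₂_le fun E hE => le_iSup₂_of_le E ?_ (le_of_eq rfl)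
    intro x hx y hy hxy
    obtain ⟨j, hj, -⟩ := hE x hx y hy hxy
    omega
  | succ m =>
    refine iSup₂_le fun E hE => le_iSup₂_of_le (E.image ((⇑f)^[m])) ?_ (le_of_eq ?_)
    · intro u hu v hv huv
      obtain ⟨x, hx, rfl⟩ := Finset.mem_image.1 hu
      obtain ⟨y, hy, rfl⟩ := Finset.mem_image.1 hv
      have hxy : x ≠ y := fun h => huv (by rw [h])
      obtain ⟨j, hj, hd⟩ := hE x hx y hy hxy
      refine ⟨m - j, by omega, ?_⟩
      rw [symm_iterate_iterate f x (m-j) m (by omega), symm_iterate_iterate f y (m-j) m (by omega)]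
      have hmj : m - (m - j) = j := by omega
      rwa [hmj]
    · rw [Finset.sum_image (fun x hx y hy h => f.injective.iterate m h)]
      refine Finset.sum_congr rfl fun x hx => ?_
      have := birkhoff_symm_iterate f φ (m+1) x
      simp only [Nat.add_sub_cancel] at this
      rw [this]

lemma sepSum_symm (n : ℕ) (ε : ℝ) : sepSum (⇑f.symm) φ n ε = sepSum (⇑f) φ n ε := by
  refine le_antisymm ?_ (sepSum_symm_le f φ n ε)
  have := sepSum_symm_le f.symm φ n ε
  rwa [Homeomorph.symm_symm] at this

lemma exists_max_sep [CompactSpace X] [Nonempty X] (g : X → X) (hg : Continuous g) (n : ℕ)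
    {ε : ℝ} (hε : 0 < ε) :
    ∃ E : Finset X, IsSeparatedSet g n ε E ∧
      ∀ x : X, ∃ y ∈ E, ∀ j < n, dist (g^[j] x) (g^[j] y) ≤ ε := by
  classical
  set U : X → Set X := fun t => ⋂ j ∈ Set.Iio n, (g^[j]) ⁻¹' Metric.ball (g^[j] t) (ε/2) with hU
  have hUopen : ∀ t, IsOpen (U t) := fun t =>
    (Set.finite_Iio _).isOpen_biInter fun j _ => Metric.isOpen_ball.preimage (hg.iterate j)
  have hUmem : ∀ t, t ∈ U t := fun t => by
    simp only [hU, Set.mem_iInter, Set.mem_preimage, Metric.mem_ball]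
    intro j _
    simpa using half_pos hε
  obtain ⟨T, hT⟩ := isCompact_univ.elim_finite_subcover U hUopen
    (fun x _ => Set.mem_iUnion.2 ⟨x, hUmem x⟩)
  have hassign : ∀ y : X, ∃ t ∈ T, y ∈ U t := fun y => by
    have := hT (Set.mem_univ y)
    simpa using this
  choose t ht1 ht2 using hassign
  have htd : ∀ (y : X) (j), j < n → dist (g^[j] y) (g^[j] (t y)) < ε/2 := by
    intro y j hj
    have := ht2 y
    simp only [hU, Set.mem_iInter, Set.mem_preimage, Metric.mem_ball, Set.mem_Iio] at this
    exact this j hj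
  have hcard : ∀ E : Finset X, IsSeparatedSet g n ε E → E.card ≤ T.card := by
    intro E hE
    refine Finset.card_le_card_of_injOn t (fun y _ => ht1 y) ?_
    intro y₁ h₁ y₂ h₂ hty
    by_contra hne
    obtain ⟨j, hj, hd⟩ := hE y₁ h₁ y₂ h₂ hne
    have d1 := htd y₁ j hj
    have d2 := htd y₂ j hj
    rw [hty] at d1
    have := dist_triangle (g^[j] y₁) (g^[j] (t y₂)) (g^[j] y₂)
    rw [dist_comm (g^[j] (t y₂)) (g^[j] y₂)] at this
    linarith
  set S : Set ℕ := {c | ∃ E : Finset X, IsSeparatedSet g n ε E ∧ E.card = c} with hS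
  have h1S : 1 ∈ S := by
    refine ⟨{Classical.arbitrary X}, ?_, Finset.card_singleton _⟩
    intro x hx y hy hxy
    simp only [Finset.mem_singleton] at hx hy
    exact absurd (hx.trans hy.symm) hxy
  have hbdd : BddAbove S := ⟨T.card, fun c hc => by
    obtain ⟨E, hE, rfl⟩ := hc; exact hcard E hE⟩
  obtain ⟨E, hE, hcardE⟩ := Nat.sSup_mem ⟨1, h1S⟩ hbdd
  refine ⟨E, hE, fun x => ?_⟩
  by_contra hcon
  push_neg at hcon
  have hx : x ∉ E := by
    intro hx
    obtain ⟨j, hj, hd⟩ := hcon x hx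
    simp only [dist_self] at hd
    linarith
  have hsep' : IsSeparatedSet g n ε (insert x E) := by
    intro a ha b hb hab
    rcases Finset.mem_insert.1 ha with rfl | ha'
    · rcases Finset.mem_insert.1 hb with rfl | hb'
      · exact absurd rfl hab
      · exact hcon b hb'
    · rcases Finset.mem_insert.1 hb with rfl | hb'
      · obtain ⟨j, hj, hd⟩ := hcon a ha'
        exact ⟨j, hj, by rwa [dist_comm]⟩
      · exact hE a ha' b hb' hab
  have hmem2 : E.card + 1 ∈ S := ⟨insert x E, hsep', by rw [Finset.card_insert_of_notMem hx]⟩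
  have hle := le_csSup hbdd hmem2
  rw [← hcardE] at hle
  omega

end Aux2
section Core

variable (f : X ≃ₜ X) (φ : X → ℝ)

lemma abs_birkhoff_le {K : ℝ} (hK : ∀ x, |φ x| ≤ K) (g : X → X) (n : ℕ) (x : X) :
    |birkhoff g φ n x| ≤ n * K := by
  calc |∑ i ∈ Finset.range n, φ (g^[i] x)| ≤ ∑ i ∈ Finset.range n, |φ (g^[i] x)| :=
        Finset.abs_sum_le_sum_abs _ _
    _ ≤ ∑ i ∈ Finset.range n, K := Finset.sum_le_sum fun i _ => hK _
    _ = n * K := by simp [mul_comm]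

set_option maxHeartbeats 1000000 in
lemma core_bound {ε δ K lam : ℝ} {N M : ℕ} (hε : 0 < ε)
    (hδ : ∀ x y : X, dist x y ≤ ε → |φ x - φ y| ≤ δ)
    (hK : ∀ x, |φ x| ≤ K) (hK0 : 0 ≤ K)
    (Γ : Finset (Prehistory ⇑f))
    (hcov : ∀ x : X, ∃ C ∈ Γ, ∀ i ≤ C.len, dist ((⇑f.symm)^[i] x) (C.pts i) < ε)
    (hN : ∀ C ∈ Γ, N ≤ C.len) (hM : ∀ C ∈ Γ, C.len ≤ M)
    (hW : ∑ C ∈ Γ, Real.exp (-lam * C.len + C.consSum φ) ≤ 1) :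
    ∀ n : ℕ, 1 ≤ n → ∀ E : Finset X, IsSeparatedSet (⇑f.symm) n (3*ε) E →
      ∑ x ∈ E, Real.exp (birkhoff (⇑f.symm) φ n x) ≤
        n * Real.exp (lam*n + n*δ + n*|lam|/(N+1) + (M+1)*(K+|lam|)) := by
  classical
  choose c hc1 hc2 using hcov
  set g : X → X := ⇑f.symm with hg
  intro n
  induction n using Nat.strong_induction_on with
  | _ n IH =>
  intro hn E hE
  -- the target quantity
  set D : ℝ := (M+1)*(K+|lam|) with hD
  have hTpos : ∀ k : ℕ, 1 ≤ k →
      (0:ℝ) < k * Real.exp (lam*k + k*δ + k*|lam|/(N+1) + D) := by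
    intro k hk
    have : (0:ℝ) < k := by exact_mod_cast hk
    positivity
  have hsplit : ∑ x ∈ E, Real.exp (birkhoff g φ n x)
      = ∑ C ∈ Γ, ∑ x ∈ E.filter (fun x => c x = C), Real.exp (birkhoff g φ n x) :=
    (Finset.sum_fiberwise_of_maps_to (fun x _ => hc1 x) _).symm
  have hfib : ∀ C ∈ Γ, ∑ x ∈ E.filter (fun x => c x = C), Real.exp (birkhoff g φ n x)
      ≤ Real.exp (-lam * C.len + C.consSum φ) *
        (n * Real.exp (lam*n + n*δ + n*|lam|/(N+1) + D)) := by
    intro C hC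
    set EC := E.filter (fun x => c x = C) with hEC
    have hmemEC : ∀ x ∈ EC, x ∈ E ∧ c x = C := fun x hx => Finset.mem_filter.1 hx
    have hdistC : ∀ x ∈ EC, ∀ i ≤ C.len, dist (g^[i] x) (g^[i] (C.pts 0)) < ε := by
      intro x hx i hi
      obtain ⟨-, hcx⟩ := hmemEC x hx
      have h2 := hc2 x i (by rw [hcx]; exact hi)
      rw [hcx] at h2
      rwa [pts_eq f C i hi] at h2
    have hφsum : ∀ x ∈ EC, ∀ k ≤ C.len + 1,
        birkhoff g φ k x ≤ birkhoff g φ k (C.pts 0) + k * δ := by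
      intro x hx k hk
      unfold birkhoff
      have : ∀ i ∈ Finset.range k, φ (g^[i] x) ≤ φ (g^[i] (C.pts 0)) + δ := by
        intro i hi
        have hik : i ≤ C.len := by simp only [Finset.mem_range] at hi; omega
        have := hδ (g^[i] x) (g^[i] (C.pts 0)) (hdistC x hx i hik).le
        have := le_of_abs_le this
        linarith
      calc ∑ i ∈ Finset.range k, φ (g^[i] x)
          ≤ ∑ i ∈ Finset.range k, (φ (g^[i] (C.pts 0)) + δ) := Finset.sum_le_sum this
        _ = (∑ i ∈ Finset.range k, φ (g^[i] (C.pts 0))) + k * δ := by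
            rw [Finset.sum_add_distrib]; simp [mul_comm]
    have hconsSum : C.consSum φ = birkhoff g φ (C.len + 1) (C.pts 0) := consSum_eq f φ C
    have hmM : (C.len : ℝ) ≤ M := by exact_mod_cast hM C hC
    have hlamlen : lam * (C.len : ℝ) ≤ lam * n + (M+1) * |lam| ∨ True := Or.inr trivial
    rcases le_or_gt n (C.len + 1) with hcase | hcase
    · -- long case : at most one point in the fiber
      have hnM : (n : ℝ) ≤ (M : ℝ) + 1 := by
        have : n ≤ M + 1 := le_trans hcase (by have := hM C hC; omega)
        exact_mod_cast this
      have hcard1 : EC.card ≤ 1 := by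
        rw [Finset.card_le_one]
        intro a ha b hb
        by_contra hab
        obtain ⟨j, hj, hd⟩ := hE a (hmemEC a ha).1 b (hmemEC b hb).1 hab
        have hj' : j ≤ C.len := by omega
        have d1 := hdistC a ha j hj'
        have d2 := hdistC b hb j hj'
        have htri := dist_triangle (g^[j] a) (g^[j] (C.pts 0)) (g^[j] b)
        rw [dist_comm (g^[j] (C.pts 0)) (g^[j] b)] at htri
        linarith
      rcases Finset.eq_empty_or_nonempty EC with hempty | ⟨a, ha⟩
      · rw [hempty, Finset.sum_empty]
        have h1 := hTpos n hn
        positivity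
      · have hsingle : EC = {a} := by
          refine Finset.eq_singleton_iff_unique_mem.2 ⟨ha, fun b hb => ?_⟩
          exact Finset.card_le_one.1 hcard1 b hb a ha
        rw [hsingle, Finset.sum_singleton]
        -- bound the single term
        have h1 : birkhoff g φ n a ≤ birkhoff g φ n (C.pts 0) + n * δ :=
          hφsum a ha n hcase
        have h2 : birkhoff g φ n (C.pts 0) ≤ C.consSum φ + ((M:ℝ)+1) * K := by
          have hsum2 : birkhoff g φ (C.len + 1) (C.pts 0)
              = birkhoff g φ n (C.pts 0) + birkhoff g φ (C.len + 1 - n) (g^[n] (C.pts 0)) := by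
            have hnn : C.len + 1 = n + (C.len + 1 - n) := by omega
            rw [birkhoff_eq, birkhoff_eq, birkhoff_eq]
            have hba := birkhoffSum_add g φ n (C.len + 1 - n) (C.pts 0)
            rw [← hnn] at hba
            exact hba
          have habs := abs_birkhoff_le φ hK g (C.len + 1 - n) (g^[n] (C.pts 0))
          have hcast : ((C.len + 1 - n : ℕ) : ℝ) ≤ (M:ℝ) + 1 := by
            have : C.len + 1 - n ≤ M + 1 := by have := hM C hC; omega
            exact_mod_cast this
          have h3 : -(((M:ℝ)+1) * K) ≤ birkhoff g φ (C.len + 1 - n) (g^[n] (C.pts 0)) := by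
            have hlow := neg_abs_le (birkhoff g φ (C.len + 1 - n) (g^[n] (C.pts 0)))
            have : ((C.len + 1 - n : ℕ) : ℝ) * K ≤ ((M:ℝ)+1) * K :=
              mul_le_mul_of_nonneg_right hcast hK0
            nlinarith [abs_nonneg (birkhoff g φ (C.len + 1 - n) (g^[n] (C.pts 0)))]
          rw [hconsSum, hsum2]
          linarith
        have h4 : lam * (C.len : ℝ) ≤ lam * n + ((M:ℝ)+1) * |lam| := by
          have e1 : lam * (C.len:ℝ) - lam * n = lam * ((C.len:ℝ) - n) := by ring
          have e2 : |lam * ((C.len:ℝ) - n)| ≤ |lam| * ((M:ℝ)+1) := by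
            rw [abs_mul]
            refine mul_le_mul_of_nonneg_left ?_ (abs_nonneg _)
            rw [abs_le]
            constructor <;> nlinarith [Nat.cast_nonneg (α := ℝ) n, Nat.cast_nonneg (α := ℝ) C.len]
          nlinarith [le_abs_self (lam * ((C.len:ℝ) - n))]
        have hexp : birkhoff g φ n a ≤
            (-lam * C.len + C.consSum φ) + (lam*n + n*δ + n*|lam|/(N+1) + D) := by
          have hnonneg : (0:ℝ) ≤ n*|lam|/(N+1) := by positivity
          rw [hD]
          nlinarith [h1, h2, h4]
        calc Real.exp (birkhoff g φ n a)
            ≤ Real.exp ((-lam * C.len + C.consSum φ) + (lam*n + n*δ + n*|lam|/(N+1) + D)) :=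
              Real.exp_le_exp.2 hexp
          _ = Real.exp (-lam * C.len + C.consSum φ) *
                Real.exp (lam*n + n*δ + n*|lam|/(N+1) + D) := Real.exp_add _ _
          _ ≤ Real.exp (-lam * C.len + C.consSum φ) *
                (n * Real.exp (lam*n + n*δ + n*|lam|/(N+1) + D)) := by
              have h1n : (1:ℝ) ≤ n := by exact_mod_cast hn
              refine mul_le_mul_of_nonneg_left ?_ (Real.exp_pos _).le
              exact le_mul_of_one_le_left (Real.exp_pos _).le h1n
    · -- short case : use the inductive hypothesis
      set n' : ℕ := n - (C.len + 1) with hn'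
      have hn'1 : 1 ≤ n' := by omega
      have hn'lt : n' < n := by omega
      have hnsum : n = (C.len + 1) + n' := by omega
      have hinj : Set.InjOn (g^[C.len + 1]) EC := fun a _ b _ h =>
        (f.symm.injective.iterate (C.len + 1)) h
      set E' := EC.image (g^[C.len + 1]) with hE'
      have hsep' : IsSeparatedSet g n' (3*ε) E' := by
        intro u hu v hv huv
        obtain ⟨a, ha, rfl⟩ := Finset.mem_image.1 hu
        obtain ⟨b, hb, rfl⟩ := Finset.mem_image.1 hv
        have hab : a ≠ b := fun h => huv (by rw [h])
        obtain ⟨j, hj, hd⟩ := hE a (hmemEC a ha).1 b (hmemEC b hb).1 hab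
        have hjlarge : C.len + 1 ≤ j := by
          by_contra hjs
          push_neg at hjs
          have hj' : j ≤ C.len := by omega
          have d1 := hdistC a ha j hj'
          have d2 := hdistC b hb j hj'
          have htri := dist_triangle (g^[j] a) (g^[j] (C.pts 0)) (g^[j] b)
          rw [dist_comm (g^[j] (C.pts 0)) (g^[j] b)] at htri
          linarith
        refine ⟨j - (C.len + 1), by omega, ?_⟩
        have ej : ∀ w : X, g^[j - (C.len + 1)] (g^[C.len + 1] w) = g^[j] w := by
          intro w
          rw [← Function.iterate_add_apply]
          congr 1
          omega
        rw [ej a, ej b]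
        exact hd
      have hIH := IH n' hn'lt hn'1 E' hsep'
      -- split Birkhoff sums
      have hsplitB : ∀ x : X, birkhoff g φ n x
          = birkhoff g φ (C.len + 1) x + birkhoff g φ n' (g^[C.len + 1] x) := by
        intro x
        rw [birkhoff_eq, birkhoff_eq, birkhoff_eq, hnsum]
        exact birkhoffSum_add g φ (C.len + 1) n' x
      have step1 : ∑ x ∈ EC, Real.exp (birkhoff g φ n x)
          ≤ Real.exp (C.consSum φ + (C.len + 1) * δ) *
              ∑ u ∈ E', Real.exp (birkhoff g φ n' u) := by
        rw [hE', Finset.sum_image (fun a ha b hb h => hinj ha hb h), Finset.mul_sum]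
        refine Finset.sum_le_sum fun x hx => ?_
        rw [hsplitB x, Real.exp_add]
        refine mul_le_mul_of_nonneg_right ?_ (Real.exp_pos _).le
        refine Real.exp_le_exp.2 ?_
        have := hφsum x hx (C.len + 1) le_rfl
        rw [hconsSum]
        push_cast
        push_cast at this
        linarith
      have hcast : (n : ℝ) = (C.len : ℝ) + 1 + (n' : ℝ) := by exact_mod_cast hnsum
      have hn'len : (n' : ℝ) ≤ (n : ℝ) := by exact_mod_cast hn'lt.le
      have hmN2 : (N : ℝ) + 1 ≤ (C.len : ℝ) + 1 := by
        have := hN C hC; exact_mod_cast Nat.succ_le_succ this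
      have hNpos : (0:ℝ) < (N : ℝ) + 1 := by positivity
      have hAB : C.consSum φ + ((C.len:ℝ) + 1) * δ + (lam*n' + n'*δ + n'*|lam|/(N+1) + D)
          ≤ (-lam * C.len + C.consSum φ) + (lam*n + n*δ + n*|lam|/(N+1) + D) := by
        have habs : -lam ≤ |lam| := neg_le_abs lam
        have hr0 : (0:ℝ) ≤ |lam|/((N:ℝ)+1) := by positivity
        have hsumle : (n':ℝ) + ((N:ℝ)+1) ≤ (n:ℝ) := by linarith
        have hdiv : (n':ℝ)*|lam|/((N:ℝ)+1) + |lam| ≤ (n:ℝ)*|lam|/((N:ℝ)+1) := by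
          have h2 : ((n':ℝ) + ((N:ℝ)+1)) * (|lam|/((N:ℝ)+1)) ≤ (n:ℝ) * (|lam|/((N:ℝ)+1)) :=
            mul_le_mul_of_nonneg_right hsumle hr0
          have h3 : ((n':ℝ) + ((N:ℝ)+1)) * (|lam|/((N:ℝ)+1)) = (n':ℝ)*|lam|/((N:ℝ)+1) + |lam| := by
            field_simp
          have h4 : (n:ℝ) * (|lam|/((N:ℝ)+1)) = (n:ℝ)*|lam|/((N:ℝ)+1) := by ring
          linarith
        have heq1 : lam*(n:ℝ) = lam*(C.len:ℝ) + lam + lam*(n':ℝ) := by rw [hcast]; ring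
        have heq2 : (n:ℝ)*δ = ((C.len:ℝ)+1)*δ + (n':ℝ)*δ := by rw [hcast]; ring
        linarith [hdiv, habs, heq1, heq2]
      calc ∑ x ∈ EC, Real.exp (birkhoff g φ n x)
          ≤ Real.exp (C.consSum φ + (C.len + 1) * δ) *
              ∑ u ∈ E', Real.exp (birkhoff g φ n' u) := step1
        _ ≤ Real.exp (C.consSum φ + (C.len + 1) * δ) *
              (n' * Real.exp (lam*n' + n'*δ + n'*|lam|/(N+1) + D)) :=
            mul_le_mul_of_nonneg_left hIH (Real.exp_pos _).le
        _ = (n' : ℝ) * Real.exp (C.consSum φ + ((C.len:ℝ) + 1) * δ +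
              (lam*n' + n'*δ + n'*|lam|/(N+1) + D)) := by
            rw [Real.exp_add (C.consSum φ + ((C.len:ℝ) + 1) * δ)
              (lam * (n':ℝ) + (n':ℝ) * δ + (n':ℝ) * |lam| / ((N:ℝ) + 1) + D)]
            ring
        _ ≤ (n : ℝ) * Real.exp ((-lam * C.len + C.consSum φ) +
              (lam*n + n*δ + n*|lam|/(N+1) + D)) := by
            refine mul_le_mul hn'len (Real.exp_le_exp.2 hAB) (Real.exp_pos _).le ?_
            positivity
        _ = Real.exp (-lam * C.len + C.consSum φ) *
              (n * Real.exp (lam*n + n*δ + n*|lam|/(N+1) + D)) := by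
            rw [Real.exp_add]; ring
  -- combine the fibers
  rw [hsplit]
  calc ∑ C ∈ Γ, ∑ x ∈ E.filter (fun x => c x = C), Real.exp (birkhoff g φ n x)
      ≤ ∑ C ∈ Γ, Real.exp (-lam * C.len + C.consSum φ) *
          (n * Real.exp (lam*n + n*δ + n*|lam|/(N+1) + D)) := Finset.sum_le_sum hfib
    _ = (∑ C ∈ Γ, Real.exp (-lam * C.len + C.consSum φ)) *
          (n * Real.exp (lam*n + n*δ + n*|lam|/(N+1) + D)) := by rw [Finset.sum_mul]
    _ ≤ 1 * (n * Real.exp (lam*n + n*δ + n*|lam|/(N+1) + D)) := by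
        refine mul_le_mul_of_nonneg_right hW (hTpos n hn).le
    _ = n * Real.exp (lam*n + n*δ + n*|lam|/(N+1) + D) := one_mul _

end Core
section Dir1

variable (f : X ≃ₜ X) (φ : X → ℝ)

lemma dir1 [CompactSpace X] [Nonempty X] :
    invPress (⇑f) φ Set.univ ≤ topPress (⇑f) φ := by
  classical
  refine iSup₂_le fun ε hε => ?_
  refine EReal.le_of_forall_lt_iff_le.1 fun lam hlam => ?_
  refine sInf_le ⟨lam, rfl, ?_⟩
  rw [invMLim, ENNReal.iSup_eq_zero]
  intro N
  have h1 : Filter.limsup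
      (fun n : ℕ => (((n : ℝ)⁻¹ : ℝ) : EReal) * ENNReal.log (sepSum (⇑f) φ n (ε/2)))
      Filter.atTop ≤ topPress (⇑f) φ := by
    exact le_iSup₂ (f := fun (ε' : ℝ) (_ : 0 < ε') =>
      Filter.limsup (fun n : ℕ => (((n : ℝ)⁻¹ : ℝ) : EReal) * ENNReal.log (sepSum (⇑f) φ n ε'))
        Filter.atTop) (ε/2) (half_pos hε)
  obtain ⟨lam', hlam'1, hlam'2⟩ := EReal.exists_between_coe_real (lt_of_le_of_lt h1 hlam)
  have hlamlam : lam' < lam := by exact_mod_cast hlam'2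
  have hev := Filter.eventually_lt_of_limsup_lt hlam'1
  have hev2 : ∀ᶠ n : ℕ in Filter.atTop,
      sepSum (⇑f) φ n (ε/2) ≤ ENNReal.ofReal (Real.exp (lam' * n)) := by
    filter_upwards [hev, Filter.eventually_ge_atTop 1] with n hn hn1
    have hnR : (0:ℝ) < (n:ℝ) := by exact_mod_cast hn1
    have hlog : ENNReal.log (sepSum (⇑f) φ n (ε/2)) < ((lam' * n : ℝ) : EReal) := by
      by_contra hcon
      push_neg at hcon
      have h0 : (0:EReal) ≤ (((n : ℝ)⁻¹ : ℝ) : EReal) := by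
        exact_mod_cast (by positivity : (0:ℝ) ≤ (n:ℝ)⁻¹)
      have hmul := mul_le_mul_of_nonneg_left hcon h0
      have hcalc : ((((n : ℝ)⁻¹ : ℝ)) : EReal) * ((lam' * n : ℝ) : EReal) = (lam' : EReal) := by
        rw [← EReal.coe_mul]
        congr 1
        field_simp
      rw [hcalc] at hmul
      exact absurd (lt_of_le_of_lt hmul hn) (lt_irrefl _)
    by_contra hcon2
    push_neg at hcon2
    have hlt := ENNReal.log_strictMono hcon2
    rw [ENNReal.log_ofReal_of_pos (Real.exp_pos _), Real.log_exp] at hlt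
    exact absurd hlog (not_lt.2 hlt.le)
  have key : ∀ᶠ n : ℕ in Filter.atTop,
      invM (⇑f) lam φ Set.univ N ε ≤ ENNReal.ofReal (Real.exp (lam + (lam' - lam) * n)) := by
    filter_upwards [hev2, Filter.eventually_ge_atTop (N+1)] with n hsepb hnN
    have hn1 : 1 ≤ n := by omega
    have hn1R : (1:ℝ) ≤ (n:ℝ) := by exact_mod_cast hn1
    obtain ⟨E, hEsep, hEcov⟩ := exists_max_sep (⇑f.symm) f.symm.continuous n (half_pos hε)
    set Γ : Set (Prehistory ⇑f) := (fun y => mkPre f y (n-1)) '' (E : Set X) with hΓ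
    have hcover : ECovers Γ Set.univ ε := by
      intro x _
      obtain ⟨y, hyE, hy⟩ := hEcov x
      refine Set.mem_iUnion₂.2 ⟨mkPre f y (n-1), Set.mem_image_of_mem _ (by exact_mod_cast hyE), ?_⟩
      rw [mem_shadow_iff]
      intro i hi
      simp only [mkPre_len] at hi
      rw [mkPre_pts]
      exact lt_of_le_of_lt (hy i (by omega)) (by linarith)
    have hlen : ∀ C ∈ Γ, N ≤ C.len := by
      rintro C ⟨y, -, rfl⟩
      simp only [mkPre_len]
      omega
    have hinvM : invM (⇑f) lam φ Set.univ N ε ≤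
        ∑' C : Γ, ENNReal.ofReal (Real.exp (-lam * (C.1.len : ℝ) + C.1.consSum φ)) :=
      iInf_le_of_le Γ (iInf_le _ ⟨hcover, hlen⟩)
    have hfin : Γ = ↑(E.image (fun y => mkPre f y (n-1))) := by
      rw [hΓ, Finset.coe_image]
    have hmkinj : ∀ a ∈ E, ∀ b ∈ E, mkPre f a (n-1) = mkPre f b (n-1) → a = b := by
      intro a _ b _ h
      have := congrArg (fun C => Prehistory.pts C 0) h
      simpa using this
    have htsumA : (∑' C : Γ, ENNReal.ofReal (Real.exp (-lam * (C.1.len : ℝ) + C.1.consSum φ)))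
        = ∑ C ∈ E.image (fun y => mkPre f y (n-1)),
            ENNReal.ofReal (Real.exp (-lam * (C.len : ℝ) + C.consSum φ)) := by
      rw [hfin]
      exact Finset.tsum_subtype' (E.image (fun y => mkPre f y (n-1)))
        (fun C => ENNReal.ofReal (Real.exp (-lam * (C.len : ℝ) + C.consSum φ)))
    have htsum : ∑' C : Γ, ENNReal.ofReal (Real.exp (-lam * (C.1.len : ℝ) + C.1.consSum φ))
        = ∑ y ∈ E, ENNReal.ofReal (Real.exp (-lam * ((n-1 : ℕ) : ℝ) + birkhoff (⇑f.symm) φ n y)) := by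
      rw [htsumA, Finset.sum_image hmkinj]
      refine Finset.sum_congr rfl fun y hy => ?_
      have hnn : n - 1 + 1 = n := by omega
      rw [mkPre_consSum f φ y (n-1), hnn]
      simp [mkPre_len]
    have hterm : ∀ y : X, ENNReal.ofReal (Real.exp (-lam * ((n-1 : ℕ) : ℝ) + birkhoff (⇑f.symm) φ n y))
        = ENNReal.ofReal (Real.exp (lam - lam * n)) * ENNReal.ofReal (Real.exp (birkhoff (⇑f.symm) φ n y)) := by
      intro y
      rw [← ENNReal.ofReal_mul (Real.exp_pos _).le, ← Real.exp_add]
      congr 2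
      have : ((n-1 : ℕ) : ℝ) = (n:ℝ) - 1 := by
        rw [Nat.cast_sub hn1]
        norm_num
      rw [this]
      ring
    have hsum2 : ∑ y ∈ E, ENNReal.ofReal (Real.exp (birkhoff (⇑f.symm) φ n y))
        ≤ sepSum (⇑f) φ n (ε/2) := by
      rw [← sepSum_symm f φ n (ε/2)]
      exact le_iSup₂ (f := fun (E : Finset X) (_ : IsSeparatedSet (⇑f.symm) n (ε/2) E) =>
        ∑ x ∈ E, ENNReal.ofReal (Real.exp (birkhoff (⇑f.symm) φ n x))) E hEsep
    calc invM (⇑f) lam φ Set.univ N ε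
        ≤ ∑' C : Γ, ENNReal.ofReal (Real.exp (-lam * (C.1.len : ℝ) + C.1.consSum φ)) := hinvM
      _ = ∑ y ∈ E, ENNReal.ofReal (Real.exp (-lam * ((n-1 : ℕ) : ℝ) + birkhoff (⇑f.symm) φ n y)) := htsum
      _ = ENNReal.ofReal (Real.exp (lam - lam * n)) *
            ∑ y ∈ E, ENNReal.ofReal (Real.exp (birkhoff (⇑f.symm) φ n y)) := by
          rw [Finset.mul_sum]
          exact Finset.sum_congr rfl fun y _ => hterm y
      _ ≤ ENNReal.ofReal (Real.exp (lam - lam * n)) * ENNReal.ofReal (Real.exp (lam' * n)) := by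
          exact mul_le_mul_right (le_trans hsum2 hsepb) _
      _ = ENNReal.ofReal (Real.exp (lam + (lam' - lam) * n)) := by
          rw [← ENNReal.ofReal_mul (Real.exp_pos _).le, ← Real.exp_add]
          congr 2
          ring
  have htend : Filter.Tendsto (fun n : ℕ => ENNReal.ofReal (Real.exp (lam + (lam' - lam) * n)))
      Filter.atTop (nhds 0) := by
    rw [← ENNReal.ofReal_zero]
    refine (ENNReal.continuous_ofReal.tendsto 0).comp ?_
    refine (Real.tendsto_exp_atBot).comp ?_
    refine Filter.tendsto_atBot_add_const_left _ _ ?_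
    have h1 : Filter.Tendsto (fun n : ℕ => (lam - lam') * (n:ℝ)) Filter.atTop Filter.atTop := by
      refine Filter.Tendsto.const_mul_atTop (by linarith) tendsto_natCast_atTop_atTop
    have h2 : ∀ n : ℕ, (lam' - lam) * (n:ℝ) = -((lam - lam') * (n:ℝ)) := by intro n; ring
    simp only [h2]
    exact Filter.tendsto_neg_atTop_atBot.comp h1
  exact le_antisymm (ge_of_tendsto htend key) (zero_le)

end Dir1
section Dir2

variable (f : X ≃ₜ X) (φ : X → ℝ)

lemma extract [CompactSpace X] (lam ε : ℝ) (N : ℕ)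
    (h0 : invMLim (⇑f) lam φ Set.univ ε = 0) :
    ∃ Γ : Finset (Prehistory ⇑f),
      (∀ x : X, ∃ C ∈ Γ, ∀ i ≤ C.len, dist ((⇑f.symm)^[i] x) (C.pts i) < ε) ∧
      (∀ C ∈ Γ, N ≤ C.len) ∧
      (∑ C ∈ Γ, Real.exp (-lam * C.len + C.consSum φ) ≤ 1) := by
  classical
  have hMeq : invM (⇑f) lam φ Set.univ N ε = 0 :=
    le_antisymm (le_trans (le_iSup (fun N => invM (⇑f) lam φ Set.univ N ε) N) h0.le) (zero_le)
  have hlt : invM (⇑f) lam φ Set.univ N ε < 1 := by rw [hMeq]; exact zero_lt_one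
  rw [invM] at hlt
  obtain ⟨Γ₀, hΓ₀⟩ := iInf_lt_iff.1 hlt
  obtain ⟨⟨hcov₀, hlen₀⟩, hsum₀⟩ := iInf_lt_iff.1 hΓ₀
  have hsub : Set.univ ⊆ ⋃ C : Γ₀, (C : Prehistory ⇑f).shadow ε := by
    intro x hx
    obtain ⟨C, hC, hxC⟩ := Set.mem_iUnion₂.1 (hcov₀ hx)
    exact Set.mem_iUnion.2 ⟨⟨C, hC⟩, hxC⟩
  obtain ⟨t, ht⟩ := isCompact_univ.elim_finite_subcover
    (fun C : Γ₀ => (C : Prehistory ⇑f).shadow ε) (fun C => shadow_isOpen f _ ε) hsub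
  refine ⟨t.image Subtype.val, ?_, ?_, ?_⟩
  · intro x
    obtain ⟨C, hCt, hxC⟩ := Set.mem_iUnion₂.1 (ht (Set.mem_univ x))
    refine ⟨C, Finset.mem_image_of_mem _ hCt, ?_⟩
    rw [mem_shadow_iff] at hxC
    exact hxC
  · rintro C hC
    obtain ⟨C₀, hC₀t, rfl⟩ := Finset.mem_image.1 hC
    exact hlen₀ _ C₀.property
  · have hinj : ∀ a ∈ t, ∀ b ∈ t, (a : Prehistory ⇑f) = (b : Prehistory ⇑f) → a = b :=
      fun a _ b _ h => Subtype.ext h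
    have h1 : ENNReal.ofReal (∑ C ∈ t.image Subtype.val,
          Real.exp (-lam * C.len + C.consSum φ))
        = ∑ C ∈ t.image Subtype.val,
            ENNReal.ofReal (Real.exp (-lam * C.len + C.consSum φ)) :=
      ENNReal.ofReal_sum_of_nonneg (fun _ _ => (Real.exp_pos _).le)
    have h2 : (∑ C ∈ t.image Subtype.val,
          ENNReal.ofReal (Real.exp (-lam * C.len + C.consSum φ)))
        ≤ ∑' C : Γ₀, ENNReal.ofReal
            (Real.exp (-lam * ((C : Prehistory ⇑f).len : ℝ) + (C : Prehistory ⇑f).consSum φ)) := by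
      rw [Finset.sum_image hinj]
      exact ENNReal.sum_le_tsum t
    have h3 : ENNReal.ofReal (∑ C ∈ t.image Subtype.val,
        Real.exp (-lam * C.len + C.consSum φ)) < 1 := by
      rw [h1]
      exact lt_of_le_of_lt h2 hsum₀
    rw [ENNReal.ofReal_lt_one] at h3
    exact h3.le

lemma dir2 [CompactSpace X] [Nonempty X] (hφ : Continuous φ) :
    topPress (⇑f) φ ≤ invPress (⇑f) φ Set.univ := by
  classical
  refine iSup₂_le fun ε' hε' => ?_
  refine EReal.le_of_forall_lt_iff_le.1 fun b hb => ?_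
  suffices H : ∀ δ' : ℝ, 0 < δ' → Filter.limsup
      (fun n : ℕ => (((n : ℝ)⁻¹ : ℝ) : EReal) * ENNReal.log (sepSum (⇑f) φ n ε'))
      Filter.atTop ≤ ((b + δ' : ℝ) : EReal) by
    by_contra hcon
    push_neg at hcon
    obtain ⟨r, hr1, hr2⟩ := EReal.exists_between_coe_real hcon
    have hbr : b < r := by exact_mod_cast hr1
    have hH := H (r - b) (by linarith)
    rw [show b + (r - b) = r by ring] at hH
    exact absurd hr2 (not_lt.2 hH)
  intro δ' hδ'
  set η : ℝ := δ' / 4 with hηdef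
  have hη : 0 < η := by positivity
  obtain ⟨ε₀, hε₀, hmod⟩ := Metric.uniformContinuous_iff.1
    (CompactSpace.uniformContinuous_of_continuous hφ) η hη
  set ε : ℝ := min (ε₀ / 2) (ε' / 3) with hεdef
  have hε : 0 < ε := lt_min (by linarith) (by linarith)
  have h3ε : 3 * ε ≤ ε' := by
    have h := min_le_right (ε₀ / 2) (ε' / 3)
    rw [← hεdef] at h
    linarith
  have hmod' : ∀ x y : X, dist x y ≤ ε → |φ x - φ y| ≤ η := by
    intro x y hxy
    have hεε₀ : ε < ε₀ := by
      have h := min_le_left (ε₀ / 2) (ε' / 3)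
      rw [← hεdef] at h
      linarith
    have := hmod (lt_of_le_of_lt hxy hεε₀)
    rw [Real.dist_eq] at this
    exact this.le
  obtain ⟨K₀, hK₀⟩ := isCompact_univ.exists_bound_of_continuousOn hφ.continuousOn
  set K : ℝ := max K₀ 0 with hKdef
  have hK1 : ∀ x : X, |φ x| ≤ K := fun x => by
    have := hK₀ x (Set.mem_univ x)
    rw [Real.norm_eq_abs] at this
    exact le_trans this (le_max_left _ _)
  have hK2 : (0:ℝ) ≤ K := le_max_right _ _
  have hle : invPressEps (⇑f) φ Set.univ ε ≤ invPress (⇑f) φ Set.univ :=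
    le_iSup₂ (f := fun (ε : ℝ) (_ : 0 < ε) => invPressEps (⇑f) φ Set.univ ε) ε hε
  have hltb : invPressEps (⇑f) φ Set.univ ε < (b : EReal) := lt_of_le_of_lt hle hb
  rw [invPressEps] at hltb
  obtain ⟨l, hlmem, hlb⟩ := sInf_lt_iff.1 hltb
  obtain ⟨lam, rfl, hlam0⟩ := hlmem
  have hlamb : lam < b := by exact_mod_cast hlb
  set N : ℕ := ⌈|lam| / η⌉₊ with hNdef
  have hNbound : |lam| / ((N:ℝ) + 1) ≤ η := by
    have h1 : |lam| / η ≤ (N:ℝ) := Nat.le_ceil _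
    have h2 : |lam| ≤ (N:ℝ) * η := (div_le_iff₀ hη).1 h1
    rw [div_le_iff₀ (by positivity : (0:ℝ) < (N:ℝ) + 1)]
    nlinarith [hη.le, Nat.cast_nonneg (α := ℝ) N]
  obtain ⟨Γ, hcov, hlenN, hW⟩ := extract f φ lam ε N hlam0
  set M : ℕ := Γ.sup (fun C => C.len) with hMdef
  have hlenM : ∀ C ∈ Γ, C.len ≤ M := fun C hC => Finset.le_sup hC
  have hcore := core_bound f φ hε hmod' hK1 hK2 Γ hcov hlenN hlenM hW
  set D : ℝ := ((M:ℝ) + 1) * (K + |lam|) with hDdef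
  have hsep : ∀ n : ℕ, 1 ≤ n → sepSum (⇑f) φ n ε' ≤
      ENNReal.ofReal ((n:ℝ) *
        Real.exp (lam * n + n * η + n * |lam| / ((N:ℝ)+1) + D)) := by
    intro n hn
    rw [← sepSum_symm f φ n ε']
    refine iSup₂_le fun E hE => ?_
    have hE3 : IsSeparatedSet (⇑f.symm) n (3 * ε) E := by
      intro x hx y hy hxy
      obtain ⟨j, hj, hd⟩ := hE x hx y hy hxy
      exact ⟨j, hj, lt_of_le_of_lt h3ε hd⟩
    have hc := hcore n hn E hE3
    calc ∑ x ∈ E, ENNReal.ofReal (Real.exp (birkhoff (⇑f.symm) φ n x))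
        = ENNReal.ofReal (∑ x ∈ E, Real.exp (birkhoff (⇑f.symm) φ n x)) :=
          (ENNReal.ofReal_sum_of_nonneg (fun _ _ => (Real.exp_pos _).le)).symm
      _ ≤ _ := ENNReal.ofReal_le_ofReal hc
  have hlogsmall : ∀ᶠ n : ℕ in Filter.atTop, Real.log n + D ≤ (n:ℝ) * η := by
    have hA := (tendsto_natCast_atTop_atTop (R := ℝ)).eventually_ge_atTop ((2/η) * D)
    have hB := (tendsto_natCast_atTop_atTop (R := ℝ)).eventually
      (Real.isLittleO_log_id_atTop.def (by positivity : (0:ℝ) < η/2))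
    filter_upwards [hA, hB, Filter.eventually_ge_atTop 1] with n h1 h2 h3
    have hnR : (1:ℝ) ≤ (n:ℝ) := by exact_mod_cast h3
    simp only [Real.norm_eq_abs, id] at h2
    have hlogle : Real.log n ≤ (η/2) * n := by
      have := le_abs_self (Real.log n)
      have habs : |(n:ℝ)| = (n:ℝ) := abs_of_nonneg (by linarith)
      rw [habs] at h2
      linarith
    have hDle : D ≤ (η/2) * n := by
      have := mul_le_mul_of_nonneg_left h1 (by positivity : (0:ℝ) ≤ η/2)
      rw [show (η/2) * ((2/η) * D) = D by field_simp] at this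
      linarith
    linarith
  have hfinal : ∀ᶠ n : ℕ in Filter.atTop,
      (((n : ℝ)⁻¹ : ℝ) : EReal) * ENNReal.log (sepSum (⇑f) φ n ε') ≤ ((b + δ' : ℝ) : EReal) := by
    filter_upwards [hlogsmall, Filter.eventually_ge_atTop 1] with n hlogn hn1
    have hnR : (0:ℝ) < (n:ℝ) := by exact_mod_cast hn1
    have hbound := hsep n hn1
    have hexp : (n:ℝ) * Real.exp (lam * n + n * η + n * |lam| / ((N:ℝ)+1) + D)
        ≤ Real.exp ((n:ℝ) * (b + δ')) := by
      rw [show (n:ℝ) * Real.exp (lam * n + n * η + n * |lam| / ((N:ℝ)+1) + D)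
          = Real.exp (Real.log n + (lam * n + n * η + n * |lam| / ((N:ℝ)+1) + D)) by
        rw [Real.exp_add (Real.log (n:ℝ)) (lam * n + n * η + n * |lam| / ((N:ℝ)+1) + D),
          Real.exp_log hnR]]
      apply Real.exp_le_exp.2
      have hfrac : (n:ℝ) * |lam| / ((N:ℝ)+1) ≤ (n:ℝ) * η := by
        rw [mul_div_assoc]
        exact mul_le_mul_of_nonneg_left hNbound hnR.le
      have hlamb' : lam * n ≤ b * n := mul_le_mul_of_nonneg_right hlamb.le hnR.le
      have hηδ : 3 * ((n:ℝ) * η) ≤ (n:ℝ) * δ' := by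
        rw [hηdef]
        nlinarith
      nlinarith [hlogn, hfrac]
    have hlogle : ENNReal.log (sepSum (⇑f) φ n ε') ≤ (((n:ℝ) * (b + δ') : ℝ) : EReal) := by
      calc ENNReal.log (sepSum (⇑f) φ n ε')
          ≤ ENNReal.log (ENNReal.ofReal (Real.exp ((n:ℝ) * (b + δ')))) :=
            ENNReal.log_monotone (le_trans hbound (ENNReal.ofReal_le_ofReal hexp))
        _ = _ := by rw [ENNReal.log_ofReal_of_pos (Real.exp_pos _), Real.log_exp]
    have h0 : (0:EReal) ≤ (((n : ℝ)⁻¹ : ℝ) : EReal) := by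
      exact_mod_cast (by positivity : (0:ℝ) ≤ (n:ℝ)⁻¹)
    calc (((n : ℝ)⁻¹ : ℝ) : EReal) * ENNReal.log (sepSum (⇑f) φ n ε')
        ≤ (((n : ℝ)⁻¹ : ℝ) : EReal) * (((n:ℝ) * (b + δ') : ℝ) : EReal) :=
          mul_le_mul_of_nonneg_left hlogle h0
      _ = ((b + δ' : ℝ) : EReal) := by
          rw [← EReal.coe_mul]
          congr 1
          field_simp
  exact Filter.limsup_le_of_le (by isBoundedDefault) hfinal

end Dir2

theorem stmt2 [CompactSpace X] (f : X ≃ₜ X) (φ : X → ℝ) (hφ : Continuous φ) :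
    invPress (⇑f) φ Set.univ = topPress (⇑f) φ := by
  rcases isEmpty_or_nonempty X with hX | hX
  · have hinv : invPress (⇑f) φ Set.univ = ⊥ := by
      refine le_antisymm (iSup₂_le fun ε hε => ?_) bot_le
      have hall : ∀ lam : ℝ, invMLim (⇑f) lam φ Set.univ ε = 0 := by
        intro lam
        rw [invMLim, ENNReal.iSup_eq_zero]
        intro N
        refine le_antisymm ?_ (zero_le)
        have hcov : ECovers (∅ : Set (Prehistory ⇑f)) Set.univ ε :=
          fun x _ => (IsEmpty.false x).elim
        have hlen : ∀ C ∈ (∅ : Set (Prehistory ⇑f)), N ≤ C.len :=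
          fun C hC => absurd hC (Set.notMem_empty C)
        have h : invM (⇑f) lam φ Set.univ N ε ≤
            ∑' C : (∅ : Set (Prehistory ⇑f)),
              ENNReal.ofReal (Real.exp (-lam * ((C : Prehistory ⇑f).len : ℝ)
                + (C : Prehistory ⇑f).consSum φ)) :=
          iInf₂_le (∅ : Set (Prehistory ⇑f)) ⟨hcov, hlen⟩
        refine le_trans h (le_of_eq tsum_empty)
      refine EReal.le_of_forall_lt_iff_le.1 fun z hz => ?_
      exact sInf_le ⟨z, rfl, hall z⟩
    have htop : topPress (⇑f) φ = ⊥ := by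
      refine le_antisymm (iSup₂_le fun ε hε => ?_) bot_le
      have hsep0 : ∀ n : ℕ, sepSum (⇑f) φ n ε = 0 := by
        intro n
        refine le_antisymm (iSup₂_le fun E hE => ?_) (zero_le)
        have hE0 : E = ∅ := Finset.eq_empty_of_isEmpty E
        simp [hE0]
      refine Filter.limsup_le_of_le (by isBoundedDefault) ?_
      filter_upwards [Filter.eventually_ge_atTop 1] with n hn
      have hnR : (0:ℝ) < (n:ℝ)⁻¹ := by
        have : (0:ℝ) < (n:ℝ) := by exact_mod_cast hn
        positivity
      rw [hsep0 n, ENNReal.log_zero, EReal.coe_mul_bot_of_pos hnR]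
    rw [hinv, htop]
  · exact le_antisymm (dir1 f φ) (dir2 f φ hφ)
end

section
/- Let (X,d) be a compact metric space, f : X → X a continuous surjective map, Y ⊆ X, and φ, ψ : X → ℝ continuous. Then P⁻_f(φ + ψ∘f − ψ, Y) = P⁻_f(φ, Y). -/
open Filter Set Function
open scoped ENNReal NNReal BigOperators

variable {X : Type*} [MetricSpace X]

lemma consSum_cocycle {f : X → X} (φ ψ : X → ℝ) (C : Prehistory f) :
    C.consSum (fun x => φ x + ψ (f x) - ψ x)
      = C.consSum φ + ψ (f (C.pts 0)) - ψ (C.pts C.len) := by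
  unfold Prehistory.consSum
  have h1 : ∑ i ∈ Finset.range (C.len + 1), ψ (f (C.pts i))
      = ψ (f (C.pts 0)) + ∑ i ∈ Finset.range C.len, ψ (C.pts i) := by
    rw [Finset.sum_range_succ', add_comm]
    congr 1
    exact Finset.sum_congr rfl fun i hi => by rw [C.isPre i (Finset.mem_range.mp hi)]
  have h2 : ∑ i ∈ Finset.range (C.len + 1), ψ (C.pts i)
      = ∑ i ∈ Finset.range C.len, ψ (C.pts i) + ψ (C.pts C.len) :=
    Finset.sum_range_succ _ _
  simp only [Finset.sum_add_distrib, Finset.sum_sub_distrib, h1, h2]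
  ring

/-- If the consecutive sums of `φ₁` exceed those of `φ₂` by at most `K`, then vanishing of
`invMLim` for `φ₂` implies vanishing for `φ₁`. -/
lemma invMLim_zero_of_bound {f : X → X} {lam : ℝ} {φ₁ φ₂ : X → ℝ} {Y : Set X} {ε : ℝ} {K : ℝ}
    (hb : ∀ C : Prehistory f, C.consSum φ₁ - C.consSum φ₂ ≤ K)
    (h : invMLim f lam φ₂ Y ε = 0) : invMLim f lam φ₁ Y ε = 0 := by
  rw [invMLim, ENNReal.iSup_eq_zero] at h ⊢
  intro N
  have h := h N
  set c : ℝ≥0∞ := ENNReal.ofReal (Real.exp K) with hc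
  have hc0 : c ≠ 0 := by
    simp [hc, ENNReal.ofReal_eq_zero, not_le, Real.exp_pos]
  have hct : c ≠ ∞ := ENNReal.ofReal_ne_top
  refine le_antisymm ?_ zero_le
  refine ENNReal.le_of_forall_pos_le_add fun δ hδ _ => ?_
  have hlt : invM f lam φ₂ Y N ε < (δ : ℝ≥0∞) / c := by
    rw [h]
    exact ENNReal.div_pos (by exact_mod_cast hδ.ne') hct
  rw [invM, iInf_lt_iff] at hlt
  obtain ⟨Γ, hΓ⟩ := hlt
  rw [iInf_lt_iff] at hΓ
  obtain ⟨⟨hcov, hN⟩, hS⟩ := hΓ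
  calc invM f lam φ₁ Y N ε
      ≤ ∑' C : Γ, ENNReal.ofReal (Real.exp (-lam * (C.1.len : ℝ) + C.1.consSum φ₁)) :=
        iInf₂_le Γ ⟨hcov, hN⟩
    _ ≤ c * ∑' C : Γ, ENNReal.ofReal (Real.exp (-lam * (C.1.len : ℝ) + C.1.consSum φ₂)) := by
        rw [← ENNReal.tsum_mul_left]
        refine ENNReal.tsum_le_tsum fun C => ?_
        have hexp : Real.exp (-lam * (C.1.len : ℝ) + C.1.consSum φ₁)
            ≤ Real.exp K * Real.exp (-lam * (C.1.len : ℝ) + C.1.consSum φ₂) := by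
          rw [← Real.exp_add]
          exact Real.exp_le_exp.mpr (by linarith [hb C.1])
        calc ENNReal.ofReal (Real.exp (-lam * (C.1.len : ℝ) + C.1.consSum φ₁))
            ≤ ENNReal.ofReal (Real.exp K * Real.exp (-lam * (C.1.len : ℝ) + C.1.consSum φ₂)) :=
              ENNReal.ofReal_le_ofReal hexp
          _ = c * ENNReal.ofReal (Real.exp (-lam * (C.1.len : ℝ) + C.1.consSum φ₂)) :=
              ENNReal.ofReal_mul (Real.exp_pos K).le
    _ ≤ c * ((δ : ℝ≥0∞) / c) := mul_le_mul_right hS.le c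
    _ ≤ (δ : ℝ≥0∞) := ENNReal.mul_div_le
    _ = 0 + δ := (zero_add _).symm

theorem stmt8 [CompactSpace X] (f : X → X) (hf : Continuous f) (hfs : Surjective f)
    (Y : Set X) (φ ψ : X → ℝ) (hφ : Continuous φ) (hψ : Continuous ψ) :
    invPress f (fun x => φ x + ψ (f x) - ψ x) Y = invPress f φ Y := by
  obtain ⟨K, hK⟩ := (isCompact_range hψ.abs).bddAbove
  have hKb : ∀ x, |ψ x| ≤ K := fun x => hK (mem_range_self x)
  set φ' : X → ℝ := fun x => φ x + ψ (f x) - ψ x with hφ'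
  have hb₁ : ∀ C : Prehistory f, C.consSum φ' - C.consSum φ ≤ 2 * K := by
    intro C
    rw [consSum_cocycle φ ψ C]
    have := abs_le.mp (hKb (f (C.pts 0)))
    have := abs_le.mp (hKb (C.pts C.len))
    linarith [this.1, this.2]
  have hb₂ : ∀ C : Prehistory f, C.consSum φ - C.consSum φ' ≤ 2 * K := by
    intro C
    rw [consSum_cocycle φ ψ C]
    have := abs_le.mp (hKb (f (C.pts 0)))
    have := abs_le.mp (hKb (C.pts C.len))
    linarith [this.1, this.2]
  have hzero : ∀ (lam ε : ℝ), invMLim f lam φ' Y ε = 0 ↔ invMLim f lam φ Y ε = 0 :=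
    fun lam ε => ⟨invMLim_zero_of_bound hb₂, invMLim_zero_of_bound hb₁⟩
  have heps : ∀ ε : ℝ, invPressEps f φ' Y ε = invPressEps f φ Y ε := by
    intro ε
    unfold invPressEps
    congr 1
    ext l
    constructor
    · rintro ⟨lam, rfl, hl⟩; exact ⟨lam, rfl, (hzero lam ε).mp hl⟩
    · rintro ⟨lam, rfl, hl⟩; exact ⟨lam, rfl, (hzero lam ε).mpr hl⟩
  unfold invPress
  exact iSup_congr fun ε => iSup_congr fun _ => heps ε
end

section
/- Let (X,d) be a compact metric space, f : X → X a continuous surjective map, Y ⊆ X, and φ : X → ℝ a continuous function that is strictly negative on X. If P⁻_f(·, Y) is finitely valued, then the map t ↦ P⁻_f(t·φ, Y) is strictly decreasing on ℝ; moreover, for every ε > 0 the map t ↦ P⁻_f(t·φ, Y, ε) is strictly decreasing on ℝ. -/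
open Filter Set Function
open scoped ENNReal NNReal BigOperators

variable {X : Type*} [MetricSpace X]

section Aux

variable {X : Type*} [MetricSpace X]

private lemma invM_empty (f : X → X) (lam : ℝ) (φ : X → ℝ) (N : ℕ) (ε : ℝ) :
    invM f lam φ (∅ : Set X) N ε = 0 := by
  refine le_antisymm ?_ zero_le
  refine iInf_le_of_le ∅ (iInf_le_of_le ⟨by simp [ECovers], by simp⟩ ?_)
  simp [tsum_empty]

private lemma invPressEps_empty (f : X → X) (φ : X → ℝ) (ε : ℝ) :
    invPressEps f φ (∅ : Set X) ε = ⊥ := by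
  have hM : ∀ lam : ℝ, invMLim f lam φ (∅ : Set X) ε = 0 := fun lam => by
    simp [invMLim, invM_empty]
  rw [invPressEps, sInf_eq_bot]
  intro b hb
  induction b using EReal.rec with
  | bot => exact absurd hb (lt_irrefl _)
  | coe x => exact ⟨(x - 1 : ℝ), ⟨x - 1, rfl, hM _⟩, by exact_mod_cast sub_one_lt x⟩
  | top => exact ⟨(0 : ℝ), ⟨0, rfl, hM _⟩, EReal.coe_lt_top 0⟩

private lemma invPress_empty (f : X → X) (φ : X → ℝ) :
    invPress f φ (∅ : Set X) = ⊥ := by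
  simp [invPress, invPressEps_empty]

/-- Core comparison: if `ψ + c ≤ χ` pointwise, then
`M⁻(lam, ψ) ≤ e^{-c} · M⁻(lam + c, χ)`. -/
private lemma invM_le_mul (f : X → X) {ψ χ : X → ℝ} {c : ℝ} (h : ∀ x, ψ x + c ≤ χ x)
    (lam : ℝ) (Y : Set X) (N : ℕ) (ε : ℝ) :
    invM f lam ψ Y N ε ≤ ENNReal.ofReal (Real.exp (-c)) * invM f (lam + c) χ Y N ε := by
  rw [invM, invM, ENNReal.mul_iInf_of_ne (by simp [Real.exp_pos]) (by simp)]
  refine le_iInf fun Γ => ?_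
  rw [ENNReal.mul_iInf_of_ne (by simp [Real.exp_pos]) (by simp)]
  refine le_iInf fun hΓ => ?_
  refine iInf_le_of_le Γ (iInf_le_of_le hΓ ?_)
  rw [← ENNReal.tsum_mul_left]
  refine ENNReal.tsum_le_tsum fun C => ?_
  rw [← ENNReal.ofReal_mul (Real.exp_pos _).le, ← Real.exp_add]
  refine ENNReal.ofReal_le_ofReal (Real.exp_le_exp.2 ?_)
  have hsum : C.1.consSum ψ + (C.1.len + 1 : ℕ) * c ≤ C.1.consSum χ := by
    have := Finset.sum_le_sum (f := fun i => ψ (C.1.pts i) + c) (g := fun i => χ (C.1.pts i))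
      (s := Finset.range (C.1.len + 1)) (fun i _ => h _)
    simpa [Prehistory.consSum, Finset.sum_add_distrib, mul_comm] using this
  push_cast at hsum ⊢
  nlinarith [hsum]

private lemma invMLim_zero (f : X → X) {ψ χ : X → ℝ} {c : ℝ} (h : ∀ x, ψ x + c ≤ χ x)
    (lam : ℝ) (Y : Set X) (ε : ℝ) (hz : invMLim f (lam + c) χ Y ε = 0) :
    invMLim f lam ψ Y ε = 0 := by
  refine le_antisymm ?_ zero_le
  rw [invMLim]
  refine iSup_le fun N => ?_
  calc invM f lam ψ Y N ε ≤ ENNReal.ofReal (Real.exp (-c)) * invM f (lam + c) χ Y N ε :=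
        invM_le_mul f h lam Y N ε
    _ ≤ ENNReal.ofReal (Real.exp (-c)) * invMLim f (lam + c) χ Y ε :=
        mul_le_mul_right (le_iSup (fun N => invM f (lam + c) χ Y N ε) N) _
    _ = 0 := by rw [hz, mul_zero]

/-- If `ψ + c ≤ χ` pointwise then `P⁻ε(ψ) + c ≤ P⁻ε(χ)`. -/
private lemma invPressEps_add_le (f : X → X) {ψ χ : X → ℝ} {c : ℝ} (h : ∀ x, ψ x + c ≤ χ x)
    (Y : Set X) (ε : ℝ) :
    invPressEps f ψ Y ε + (c : EReal) ≤ invPressEps f χ Y ε := by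
  simp only [invPressEps]
  refine le_sInf fun l hl => ?_
  obtain ⟨lam, rfl, hz⟩ := hl
  have h1 : invMLim f (lam - c) ψ Y ε = 0 := by
    refine invMLim_zero f h (lam - c) Y ε ?_
    rwa [sub_add_cancel]
  have h2 : invPressEps f ψ Y ε ≤ ((lam - c : ℝ) : EReal) :=
    sInf_le ⟨lam - c, rfl, h1⟩
  calc invPressEps f ψ Y ε + (c : EReal) ≤ ((lam - c : ℝ) : EReal) + (c : EReal) :=
        add_le_add_left h2 _
    _ = ((lam : ℝ) : EReal) := by norm_cast; ring

/-- Lower bound: if `Y` is nonempty and `m ≤ ψ` pointwise, then `m ≤ P⁻ε(ψ)`. -/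
private lemma le_invPressEps (f : X → X) {ψ : X → ℝ} {m : ℝ} (hm : ∀ x, m ≤ ψ x)
    {Y : Set X} (hY : Y.Nonempty) (ε : ℝ) :
    (m : EReal) ≤ invPressEps f ψ Y ε := by
  refine le_sInf fun l hl => ?_
  obtain ⟨lam, rfl, hz⟩ := hl
  by_contra hlt
  push_neg at hlt
  have hlam : lam ≤ m := by exact_mod_cast hlt.le
  -- show invMLim ≥ exp m > 0, contradicting hz
  have key : ENNReal.ofReal (Real.exp m) ≤ invM f lam ψ Y 0 ε := by
    refine le_iInf fun Γ => le_iInf fun hΓ => ?_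
    obtain ⟨y, hy⟩ := hY
    have := hΓ.1 hy
    simp only [Set.mem_iUnion] at this
    obtain ⟨C, hC, -⟩ := this
    refine le_trans ?_ (ENNReal.le_tsum (⟨C, hC⟩ : Γ))
    refine ENNReal.ofReal_le_ofReal (Real.exp_le_exp.2 ?_)
    have hS : (C.len + 1 : ℕ) * m ≤ C.consSum ψ := by
      have := Finset.sum_le_sum (f := fun _ : ℕ => m) (g := fun i => ψ (C.pts i))
        (s := Finset.range (C.len + 1)) (fun i _ => hm _)
      simpa [Prehistory.consSum, mul_comm] using this
    have hn : (0 : ℝ) ≤ (C.len : ℝ) := Nat.cast_nonneg _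
    push_cast at hS
    nlinarith [hS, hn, hlam]
  have : (0 : ℝ≥0∞) < invMLim f lam ψ Y ε := by
    calc (0 : ℝ≥0∞) < ENNReal.ofReal (Real.exp m) := by simp [Real.exp_pos]
      _ ≤ invM f lam ψ Y 0 ε := key
      _ ≤ invMLim f lam ψ Y ε := le_iSup (fun N => invM f lam ψ Y N ε) 0
  rw [hz] at this
  exact lt_irrefl _ this

end Aux

theorem stmt9 [CompactSpace X] (f : X → X) (hf : Continuous f) (hfs : Surjective f)
    (Y : Set X) (φ : X → ℝ) (hφ : Continuous φ) (hneg : ∀ x : X, φ x < 0)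
    (hfin : ∀ χ : X → ℝ, Continuous χ → ∃ r : ℝ, invPress f χ Y = (r : EReal)) :
    StrictAnti (fun t : ℝ => invPress f (fun x => t * φ x) Y) ∧
      ∀ ε : ℝ, 0 < ε → StrictAnti (fun t : ℝ => invPressEps f (fun x => t * φ x) Y ε) := by
  -- First: Y is nonempty (else invPress = ⊥, contradicting hfin)
  have hY : Y.Nonempty := by
    rcases Y.eq_empty_or_nonempty with hE | hH
    · exfalso
      obtain ⟨r, hr⟩ := hfin (fun _ => 0) continuous_const
      rw [hE, invPress_empty] at hr
      exact (EReal.bot_ne_coe r) hr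
    · exact hH
  have : Nonempty X := ⟨hY.choose⟩
  -- φ attains a strictly negative maximum
  obtain ⟨x0, hx0⟩ : ∃ x0 : X, ∀ x, φ x ≤ φ x0 := by
    obtain ⟨x0, -, h⟩ := isCompact_univ.exists_isMaxOn Set.univ_nonempty hφ.continuousOn
    exact ⟨x0, fun x => h (Set.mem_univ x)⟩
  set a : ℝ := -φ x0 with ha
  have ha0 : 0 < a := by simp [ha]; linarith [hneg x0]
  have hub : ∀ x, φ x ≤ -a := fun x => by simpa [ha] using hx0 x
  -- the pointwise comparison for s < t
  have hcomp : ∀ s t : ℝ, s < t → ∀ x, t * φ x + (t - s) * a ≤ s * φ x := by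
    intro s t hst x
    nlinarith [hub x, hneg x, sub_pos.2 hst]
  -- key inequality on invPressEps
  have hkey : ∀ s t : ℝ, s < t → ∀ ε : ℝ,
      invPressEps f (fun x => t * φ x) Y ε + (((t - s) * a : ℝ) : EReal) ≤
        invPressEps f (fun x => s * φ x) Y ε :=
    fun s t hst ε => invPressEps_add_le f (hcomp s t hst) Y ε
  -- invPressEps ≤ invPress, and invPress finite
  have hle : ∀ (t ε : ℝ), 0 < ε →
      invPressEps f (fun x => t * φ x) Y ε ≤ invPress f (fun x => t * φ x) Y := by
    intro t ε hε
    exact le_iSup_of_le ε (le_iSup_of_le hε le_rfl)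
  have hcont : ∀ t : ℝ, Continuous (fun x => t * φ x) := fun t => continuous_const.mul hφ
  have hEne_top : ∀ (t ε : ℝ), 0 < ε → invPressEps f (fun x => t * φ x) Y ε ≠ ⊤ := by
    intro t ε hε h
    obtain ⟨r, hr⟩ := hfin _ (hcont t)
    have := hle t ε hε
    rw [h, hr] at this
    exact ((EReal.coe_lt_top r).not_ge) this
  have hEne_bot : ∀ (t ε : ℝ), invPressEps f (fun x => t * φ x) Y ε ≠ ⊥ := by
    intro t ε h
    -- lower bound m = min over X of t * φ x : use -(|t| * (sup |φ|))... simpler: min attained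
    obtain ⟨x1, hx1⟩ : ∃ x1 : X, ∀ x, t * φ x1 ≤ t * φ x := by
      obtain ⟨x1, -, h1⟩ := isCompact_univ.exists_isMinOn Set.univ_nonempty (hcont t).continuousOn
      exact ⟨x1, fun x => h1 (Set.mem_univ x)⟩
    have := le_invPressEps f (ψ := fun x => t * φ x) (m := t * φ x1) hx1 hY ε
    rw [h] at this
    exact (EReal.bot_ne_coe _) ((le_bot_iff.1 this).symm)
  -- strict anti for invPressEps
  have hanti_eps : ∀ ε : ℝ, 0 < ε →
      StrictAnti (fun t : ℝ => invPressEps f (fun x => t * φ x) Y ε) := by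
    intro ε hε s t hst
    simp only
    have hk := hkey s t hst ε
    have hc : (0 : ℝ) < (t - s) * a := mul_pos (sub_pos.2 hst) ha0
    obtain ⟨p, hp⟩ : ∃ p : ℝ, invPressEps f (fun x => t * φ x) Y ε = (p : EReal) :=
      ⟨_, (EReal.coe_toReal (hEne_top t ε hε) (hEne_bot t ε)).symm⟩
    rw [hp] at hk ⊢
    calc (p : EReal) < (p : EReal) + (((t - s) * a : ℝ) : EReal) := by
          exact_mod_cast lt_add_of_pos_right p hc
      _ ≤ invPressEps f (fun x => s * φ x) Y ε := hk
  refine ⟨?_, hanti_eps⟩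
  -- strict anti for invPress
  intro s t hst
  simp only
  obtain ⟨rs, hrs⟩ := hfin _ (hcont s)
  obtain ⟨rt, hrt⟩ := hfin _ (hcont t)
  rw [hrs, hrt]
  have hc : (0 : ℝ) < (t - s) * a := mul_pos (sub_pos.2 hst) ha0
  have hsle : invPress f (fun x => t * φ x) Y ≤ ((rs - (t - s) * a : ℝ) : EReal) := by
    rw [invPress]
    refine iSup_le fun ε => iSup_le fun hε => ?_
    have hk := hkey s t hst ε
    have h2 : invPressEps f (fun x => s * φ x) Y ε ≤ (rs : EReal) := by
      rw [← hrs]; exact hle s ε hε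
    have h3 : invPressEps f (fun x => t * φ x) Y ε + (((t - s) * a : ℝ) : EReal) ≤ (rs : EReal) :=
      hk.trans h2
    obtain ⟨p, hp⟩ : ∃ p : ℝ, invPressEps f (fun x => t * φ x) Y ε = (p : EReal) :=
      ⟨_, (EReal.coe_toReal (hEne_top t ε hε) (hEne_bot t ε)).symm⟩
    rw [hp] at h3 ⊢
    have : p + (t - s) * a ≤ rs := by exact_mod_cast h3
    exact_mod_cast (by linarith : p ≤ rs - (t - s) * a)
  have : (rt : EReal) ≤ ((rs - (t - s) * a : ℝ) : EReal) := by rw [← hrt]; exact hsle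
  have hreal : rt ≤ rs - (t - s) * a := by exact_mod_cast this
  exact_mod_cast (by linarith : rt < rs)
end

section
/- Let (X,d) be a compact metric space, f : X → X a continuous surjective map, ε > 0, and φ : X → ℝ a continuous function that is strictly negative on X. If the ε-inverse pressure P⁻_f(0, X, ε) of the zero function is finite, then the map t ↦ P⁻_f(t·φ, X, ε) has a unique zero t(ε), and t(ε) ≥ 0. -/
open Filter Set Function
open scoped ENNReal NNReal BigOperators

variable {X : Type*} [MetricSpace X]

section InvPressAux

lemma consSum_smul {f : X → X} (C : Prehistory f) (t : ℝ) (φ : X → ℝ) :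
    C.consSum (fun x => t * φ x) = t * C.consSum φ := by
  simp [Prehistory.consSum, Finset.mul_sum]

lemma consSum_le {f : X → X} (C : Prehistory f) {φ : X → ℝ} {a : ℝ}
    (h : ∀ x, φ x ≤ a) : C.consSum φ ≤ (C.len + 1) * a := by
  have := Finset.sum_le_sum (s := Finset.range (C.len + 1))
    (f := fun i => φ (C.pts i)) (g := fun _ => a) (fun i _ => h _)
  simpa [Prehistory.consSum, Finset.sum_const, mul_comm] using this

lemma le_consSum {f : X → X} (C : Prehistory f) {φ : X → ℝ} {a : ℝ}
    (h : ∀ x, a ≤ φ x) : (C.len + 1) * a ≤ C.consSum φ := by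
  have := Finset.sum_le_sum (s := Finset.range (C.len + 1))
    (f := fun _ => a) (g := fun i => φ (C.pts i)) (fun i _ => h _)
  simpa [Prehistory.consSum, Finset.sum_const, mul_comm] using this

/-- Comparison: if the weights of `(lam1, ψ1)` are dominated by those of `(lam2, ψ2)`
up to an additive constant `K`, then `invM` is dominated up to the factor `exp K`. -/
lemma invM_le_invM {f : X → X} {lam1 lam2 : ℝ} {ψ1 ψ2 : X → ℝ} {K : ℝ}
    (h : ∀ C : Prehistory f,
      -lam1 * (C.len : ℝ) + C.consSum ψ1 ≤ -lam2 * (C.len : ℝ) + C.consSum ψ2 + K)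
    (Y : Set X) (N : ℕ) (ε : ℝ) :
    invM f lam1 ψ1 Y N ε ≤ ENNReal.ofReal (Real.exp K) * invM f lam2 ψ2 Y N ε := by
  have hc0 : ENNReal.ofReal (Real.exp K) ≠ 0 := by
    simp [ENNReal.ofReal_eq_zero, not_le, Real.exp_pos]
  have hct : ENNReal.ofReal (Real.exp K) ≠ ∞ := ENNReal.ofReal_ne_top
  rw [invM, invM, ENNReal.mul_iInf_of_ne hc0 hct]
  refine le_iInf fun Γ => ?_
  rw [ENNReal.mul_iInf_of_ne hc0 hct]
  refine le_iInf fun hΓ => ?_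
  refine (iInf₂_le Γ hΓ).trans ?_
  rw [← ENNReal.tsum_mul_left]
  refine ENNReal.tsum_le_tsum fun C => ?_
  rw [← ENNReal.ofReal_mul (Real.exp_nonneg K)]
  refine ENNReal.ofReal_le_ofReal ?_
  rw [← Real.exp_add]
  exact Real.exp_le_exp.mpr (by linarith [h C.1])

lemma invMLim_zero_of_le {f : X → X} {lam1 lam2 : ℝ} {ψ1 ψ2 : X → ℝ} {K : ℝ}
    (h : ∀ C : Prehistory f,
      -lam1 * (C.len : ℝ) + C.consSum ψ1 ≤ -lam2 * (C.len : ℝ) + C.consSum ψ2 + K)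
    {Y : Set X} {ε : ℝ} (h0 : invMLim f lam2 ψ2 Y ε = 0) :
    invMLim f lam1 ψ1 Y ε = 0 := by
  rw [invMLim, ENNReal.iSup_eq_zero] at h0 ⊢
  intro N
  have := (invM_le_invM h Y N ε).trans_eq (by rw [h0 N, mul_zero])
  exact le_antisymm this (zero_le)

/-- The set of `lam` killing `invMLim` is upward closed. -/
lemma invMLim_zero_mono {f : X → X} {lam lam' : ℝ} {ψ : X → ℝ} {Y : Set X} {ε : ℝ}
    (hle : lam ≤ lam') (h0 : invMLim f lam ψ Y ε = 0) : invMLim f lam' ψ Y ε = 0 := by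
  refine invMLim_zero_of_le (K := 0) (fun C => ?_) h0
  have : (0:ℝ) ≤ (C.len : ℝ) := Nat.cast_nonneg _
  nlinarith

/-- Characterization of `invPressEps f ψ Y ε = c` for a real `c`. -/
lemma invPressEps_eq_iff {f : X → X} {ψ : X → ℝ} {Y : Set X} {ε : ℝ} {c : ℝ} :
    invPressEps f ψ Y ε = (c : EReal) ↔
      ((∀ lam : ℝ, c < lam → invMLim f lam ψ Y ε = 0) ∧
       (∀ lam : ℝ, invMLim f lam ψ Y ε = 0 → c ≤ lam)) := by
  constructor
  · intro h
    constructor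
    · intro lam hlam
      have hlt : sInf {l : EReal | ∃ lam : ℝ, l = (lam : EReal) ∧ invMLim f lam ψ Y ε = 0}
          < (lam : EReal) := by
        rw [← invPressEps, h]; exact_mod_cast hlam
      obtain ⟨l, ⟨μ, rfl, hμ⟩, hl⟩ := sInf_lt_iff.mp hlt
      exact invMLim_zero_mono (le_of_lt (by exact_mod_cast hl)) hμ
    · intro lam hlam
      have : invPressEps f ψ Y ε ≤ (lam : EReal) := sInf_le ⟨lam, rfl, hlam⟩
      rw [h] at this; exact_mod_cast this
  · rintro ⟨h1, h2⟩
    refine le_antisymm ?_ ?_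
    · by_contra hlt
      push_neg at hlt
      obtain ⟨q, hq1, hq2⟩ := EReal.exists_rat_btwn_of_lt hlt
      have : invPressEps f ψ Y ε ≤ ((q : ℝ) : EReal) :=
        sInf_le ⟨(q : ℝ), rfl, h1 _ (by exact_mod_cast hq1)⟩
      exact absurd (this.trans_lt hq2) (lt_irrefl _)
    · refine le_sInf ?_
      rintro l ⟨lam, rfl, hlam⟩
      exact_mod_cast h2 lam hlam

lemma invMLim_zero_of_isEmpty [IsEmpty X] (f : X → X) (lam : ℝ) (ψ : X → ℝ) (ε : ℝ) :
    invMLim f lam ψ Set.univ ε = 0 := by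
  rw [invMLim, ENNReal.iSup_eq_zero]
  intro N
  refine le_antisymm ?_ (zero_le)
  have h := iInf₂_le (f := fun (Γ : Set (Prehistory f))
      (_ : ECovers Γ Set.univ ε ∧ ∀ C ∈ Γ, N ≤ C.len) =>
      ∑' C : Γ, ENNReal.ofReal (Real.exp (-lam * (C.1.len : ℝ) + C.1.consSum ψ)))
    (∅ : Set (Prehistory f)) ⟨fun x _ => (IsEmpty.false x).elim, fun C hC => absurd hC (by simp)⟩
  rw [invM]
  simpa using h

end InvPressAux

set_option maxHeartbeats 2000000 in
theorem stmt12 [CompactSpace X] (f : X → X) (hf : Continuous f) (hfs : Surjective f)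
    (ε : ℝ) (hε : 0 < ε) (φ : X → ℝ) (hφ : Continuous φ) (hneg : ∀ x : X, φ x < 0)
    (hfin : ∃ r : ℝ, invPressEps f (fun _ => (0 : ℝ)) Set.univ ε = (r : EReal)) :
    ∃ t : ℝ, 0 ≤ t ∧ invPressEps f (fun x => t * φ x) Set.univ ε = (0 : EReal) ∧
      ∀ t' : ℝ, invPressEps f (fun x => t' * φ x) Set.univ ε = (0 : EReal) → t' = t := by
  classical
  obtain ⟨r, hr⟩ := hfin
  obtain ⟨hr1, hr2⟩ := invPressEps_eq_iff.mp hr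
  -- X is nonempty
  have hX : Nonempty X := by
    by_contra hX
    haveI : IsEmpty X := not_nonempty_iff.mp hX
    have h0 := invMLim_zero_of_isEmpty f (r - 1) (fun _ => (0:ℝ)) ε
    have := hr2 _ h0
    linarith
  -- for negative lam, invMLim of the zero potential is nonzero
  have hnz : ∀ lam : ℝ, lam < 0 → invMLim f lam (fun _ => (0:ℝ)) Set.univ ε ≠ 0 := by
    intro lam hlam h0
    have h1 : (1 : ℝ≥0∞) ≤ invMLim f lam (fun _ => (0:ℝ)) Set.univ ε := by
      refine le_trans ?_ (le_iSup _ 0)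
      rw [invM]
      refine le_iInf fun Γ => le_iInf fun hΓ => ?_
      obtain ⟨x⟩ := hX
      have hx := hΓ.1 (Set.mem_univ x)
      rw [Set.mem_iUnion₂] at hx
      obtain ⟨C, hC, -⟩ := hx
      refine le_trans ?_ (ENNReal.le_tsum (⟨C, hC⟩ : Γ))
      have hcs : C.consSum (fun _ => (0:ℝ)) = 0 := by simp [Prehistory.consSum]
      rw [hcs, add_zero]
      rw [ENNReal.one_le_ofReal]
      exact Real.one_le_exp (mul_nonneg (by linarith) (Nat.cast_nonneg _))
    rw [h0] at h1
    exact absurd h1 (by simp)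
  have hr0 : 0 ≤ r := by
    by_contra hrneg
    push_neg at hrneg
    exact hnz (r / 2) (by linarith) (hr1 _ (by linarith))
  -- bounds on φ
  obtain ⟨xM, -, hxM⟩ := isCompact_univ.exists_isMaxOn Set.univ_nonempty hφ.continuousOn
  obtain ⟨xm, -, hxm⟩ := isCompact_univ.exists_isMinOn Set.univ_nonempty hφ.continuousOn
  set a : ℝ := -φ xM with ha_def
  set b : ℝ := -φ xm with hb_def
  have ha : 0 < a := by simp only [ha_def]; linarith [hneg xM]
  have hφa : ∀ x, φ x ≤ -a := fun x => by
    have := hxM (Set.mem_univ x); simp only [ha_def, neg_neg]; exact this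
  have haφ : ∀ x, -b ≤ φ x := fun x => by
    have := hxm (Set.mem_univ x); simp only [hb_def, neg_neg]; exact this
  have hψ0 : (fun x => (0:ℝ) * φ x) = (fun _ : X => (0:ℝ)) := funext fun x => zero_mul _
  -- transfer lemmas
  have key1 : ∀ t' t : ℝ, t' ≤ t → ∀ lam : ℝ,
      invMLim f lam (fun x => t' * φ x) Set.univ ε = 0 →
      invMLim f (lam - (t - t') * a) (fun x => t * φ x) Set.univ ε = 0 := by
    intro t' t htt lam h0
    refine invMLim_zero_of_le (K := -((t - t') * a)) (fun C => ?_) h0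
    have hS : C.consSum φ ≤ ((C.len : ℝ) + 1) * (-a) := consSum_le C hφa
    rw [consSum_smul, consSum_smul]
    have hδ : 0 ≤ t - t' := by linarith
    set n : ℝ := (C.len : ℝ)
    have hn : 0 ≤ n := Nat.cast_nonneg _
    nlinarith [mul_nonneg hδ (by nlinarith : (0:ℝ) ≤ -(a * (n + 1) + C.consSum φ))]
  have key2 : ∀ t' t : ℝ, t' ≤ t → ∀ lam : ℝ,
      invMLim f lam (fun x => t * φ x) Set.univ ε = 0 →
      invMLim f (lam + (t - t') * b) (fun x => t' * φ x) Set.univ ε = 0 := by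
    intro t' t htt lam h0
    refine invMLim_zero_of_le (K := (t - t') * b) (fun C => ?_) h0
    have hS : ((C.len : ℝ) + 1) * (-b) ≤ C.consSum φ := le_consSum C haφ
    rw [consSum_smul, consSum_smul]
    have hδ : 0 ≤ t - t' := by linarith
    set n : ℝ := (C.len : ℝ)
    have hn : 0 ≤ n := Nat.cast_nonneg _
    nlinarith [mul_nonneg hδ (by nlinarith : (0:ℝ) ≤ b * (n + 1) + C.consSum φ)]
  -- the zero sets and their infima
  set S : ℝ → Set ℝ :=
    fun t => {lam | invMLim f lam (fun x => t * φ x) Set.univ ε = 0} with hS_def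
  have hS0mem : ∀ lam : ℝ, r < lam → lam ∈ S 0 := by
    intro lam hlam
    show invMLim f lam (fun x => (0:ℝ) * φ x) Set.univ ε = 0
    rw [hψ0]; exact hr1 lam hlam
  have hS0le : ∀ lam ∈ S 0, r ≤ lam := by
    intro lam hlam
    refine hr2 lam ?_
    rw [← hψ0]; exact hlam
  have hne : ∀ t : ℝ, 0 ≤ t → (S t).Nonempty := by
    intro t ht
    refine ⟨r + 1 - (t - 0) * a, key1 0 t ht _ (hS0mem _ (by linarith))⟩
  have hbdd : ∀ t : ℝ, 0 ≤ t → ∀ μ ∈ S t, r - t * b ≤ μ := by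
    intro t ht μ hμ
    have := hS0le _ (key2 0 t ht μ hμ)
    simp only [sub_zero] at this
    linarith
  have hbdd' : ∀ t : ℝ, 0 ≤ t → BddBelow (S t) :=
    fun t ht => ⟨r - t * b, fun μ hμ => hbdd t ht μ hμ⟩
  set G : ℝ → ℝ := fun t => sInf (S t) with hG_def
  -- monotonicity bounds for G on [0, ∞)
  have hGle : ∀ t' t : ℝ, 0 ≤ t' → t' ≤ t → G t + (t - t') * a ≤ G t' := by
    intro t' t ht' htt
    refine le_csInf (hne t' ht') fun lam hlam => ?_
    have h1 := key1 t' t htt lam hlam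
    have h2 := csInf_le (hbdd' t (le_trans ht' htt)) h1
    linarith
  have hGge : ∀ t' t : ℝ, 0 ≤ t' → t' ≤ t → G t' - (t - t') * b ≤ G t := by
    intro t' t ht' htt
    refine le_csInf (hne t (le_trans ht' htt)) fun μ hμ => ?_
    have h1 := key2 t' t htt μ hμ
    have h2 := csInf_le (hbdd' t' ht') h1
    linarith
  have hb : 0 < b := by
    have := hφa xm
    simp only [hb_def]
    linarith [hneg xm]
  have hG0 : G 0 = r := by
    refine le_antisymm (le_of_forall_pos_le_add fun δ hδ => ?_) (le_csInf (hne 0 le_rfl) hS0le)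
    exact csInf_le (hbdd' 0 le_rfl) (hS0mem _ (by linarith))
  -- G is continuous on [0, ∞)
  have hlip : LipschitzOnWith (Real.toNNReal b) G (Set.Ici 0) := by
    refine LipschitzOnWith.of_dist_le_mul fun t ht t' ht' => ?_
    simp only [Set.mem_Ici] at ht ht'
    rw [Real.dist_eq, Real.dist_eq, Real.coe_toNNReal b hb.le]
    rcases le_total t' t with h | h
    · have h1 := hGle t' t ht' h
      have h2 := hGge t' t ht' h
      rw [abs_of_nonneg (by linarith : (0:ℝ) ≤ t - t'),
        abs_of_nonpos (by nlinarith : G t - G t' ≤ 0)]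
      nlinarith
    · have h1 := hGle t t' ht h
      have h2 := hGge t t' ht h
      rw [abs_of_nonpos (by linarith : t - t' ≤ 0),
        abs_of_nonneg (by nlinarith : (0:ℝ) ≤ G t - G t')]
      nlinarith
  set T : ℝ := (r + 1) / a with hT_def
  have hT0 : 0 ≤ T := div_nonneg (by linarith) ha.le
  have hGT : G T ≤ -1 := by
    have h1 := hGle 0 T le_rfl hT0
    have : (T - 0) * a = r + 1 := by
      rw [sub_zero, hT_def]; field_simp [ha.ne']
    rw [this] at h1
    linarith [hG0 ▸ h1]
  -- intermediate value theorem
  have hcont : ContinuousOn G (Set.Icc 0 T) :=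
    (hlip.mono (Set.Icc_subset_Ici_self)).continuousOn
  have hiv := intermediate_value_Icc' hT0 hcont
  have h0mem : (0:ℝ) ∈ Set.Icc (G T) (G 0) := ⟨by linarith, by rw [hG0]; exact hr0⟩
  obtain ⟨t₀, ht₀mem, ht₀⟩ := hiv h0mem
  obtain ⟨ht₀0, -⟩ := ht₀mem
  -- t₀ is the desired zero
  refine ⟨t₀, ht₀0, ?_, ?_⟩
  · rw [← EReal.coe_zero, invPressEps_eq_iff]
    constructor
    · intro lam hlam
      have hlt : sInf (S t₀) < lam := by
        have hx : G t₀ < lam := by rw [ht₀]; exact hlam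
        exact hx
      obtain ⟨μ, hμ, hμlt⟩ := exists_lt_of_csInf_lt (hne t₀ ht₀0) hlt
      exact invMLim_zero_mono hμlt.le hμ
    · intro lam hlam
      have h4 : G t₀ ≤ lam := csInf_le (hbdd' t₀ ht₀0) hlam
      rw [ht₀] at h4
      exact h4
  · intro t' ht'
    rw [← EReal.coe_zero] at ht'
    obtain ⟨h1', h2'⟩ := invPressEps_eq_iff.mp ht'
    rcases lt_or_ge t' 0 with ht'neg | ht'pos
    · exfalso
      set δ : ℝ := -t' with hδ_def
      have hδpos : 0 < δ := by simp only [hδ_def]; linarith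
      have hmem : δ * a / 2 ∈ S t' := h1' _ (by positivity)
      have h3 := hS0le _ (key1 t' 0 ht'neg.le _ hmem)
      have : (0 - t') * a = δ * a := by simp [hδ_def]
      rw [this] at h3
      nlinarith
    · -- G t' = 0, then strict monotonicity
      have hGt' : G t' = 0 := by
        refine le_antisymm (le_of_forall_pos_le_add fun δ hδ => ?_)
          (le_csInf (hne t' ht'pos) h2')
        have := csInf_le (hbdd' t' ht'pos) (h1' δ hδ)
        linarith
      rcases lt_trichotomy t' t₀ with h | h | h
      · exfalso
        have := hGle t' t₀ ht'pos h.le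
        rw [ht₀, hGt'] at this
        nlinarith
      · exact h
      · exfalso
        have := hGle t₀ t' ht₀0 h.le
        rw [ht₀, hGt'] at this
        nlinarith
end

section
/- Let (X,d) be a compact metric space, f : X → X a continuous surjective map, and φ : X → ℝ a continuous function that is strictly negative on X. For n ≥ 1 let φₙ(y) := φ(y) + φ(fy) + … + φ(f^{n−1}y) be the n-th Birkhoff sum. Assume that for every n ≥ 1 and every ε > 0 the ε-inverse pressure P⁻_{fⁿ}(·, X, ε) of f^n is finitely valued, and let tₙ(ε) and tₙ denote the unique zeros of the strictly decreasing maps t ↦ P⁻_{fⁿ}(t·φₙ, X, ε) and t ↦ P⁻_{fⁿ}(t·φₙ, X) respectively. Then for all positive integers n, p and all ε > 0 one has tₙ(ε) ≥ t_{np}(ε), and tₙ = t₁ for every n ≥ 1. -/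
open Filter Set Function
open scoped ENNReal NNReal BigOperators

variable {X : Type*} [MetricSpace X]

omit [MetricSpace X] in
lemma chain_iterate {f : X → X} {L : ℕ} {zs : ℕ → X}
    (h : ∀ i < L, f (zs (i + 1)) = zs i) :
    ∀ a j, a + j ≤ L → f^[j] (zs (a + j)) = zs a := by
  intro a j
  induction j generalizing a with
  | zero => simp
  | succ j ih =>
    intro hle
    have h1 : f (zs (a + j + 1)) = zs (a + j) := h (a + j) (by omega)
    have h2 : a + (j + 1) = a + j + 1 := rfl
    rw [Function.iterate_succ_apply, h2, h1]
    exact ih a (by omega)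

private def spts (f : X → X) (n : ℕ) (C : Prehistory (f^[n])) (k : ℕ) : X :=
  f^[n * ((k + n - 1) / n) - k] (C.pts ((k + n - 1) / n))

omit [MetricSpace X] in
lemma spts_eq {f : X → X} {n : ℕ} (hn : 0 < n) (C : Prehistory (f^[n]))
    {i j : ℕ} (hj : j < n) (hji : j ≤ n * i) :
    spts f n C (n * i - j) = f^[j] (C.pts i) := by
  have hrw : n * i - j + n - 1 = (n - 1 - j) + n * i := by omega
  have hdiv : (n * i - j + n - 1) / n = i := by
    rw [hrw, Nat.add_mul_div_left _ _ hn, Nat.div_eq_of_lt (by omega)]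
    omega
  show f^[n * ((n * i - j + n - 1) / n) - (n * i - j)] (C.pts ((n * i - j + n - 1) / n)) = _
  rw [hdiv]
  congr 1
  omega

/-- interpolate a `f^[n]`-prehistory into an `f`-prehistory of `n` times the length -/
def stretch (f : X → X) (n : ℕ) (C : Prehistory (f^[n])) : Prehistory f where
  len := n * C.len
  pts := spts f n C
  isPre := by
    intro k hk
    have hn : 0 < n := by
      rcases Nat.eq_zero_or_pos n with h | h
      · subst h; simp at hk
      · exact h
    have hd := Nat.div_add_mod k n
    set i := k / n with hi
    set r := k % n with hr
    have hrn : r < n := Nat.mod_lt _ hn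
    have hni : n * (i + 1) = n * i + n := by ring
    have hiC : i < C.len := by
      rcases Nat.lt_or_ge i C.len with h | h
      · exact h
      · exfalso
        have : n * C.len ≤ n * i := Nat.mul_le_mul_left _ h
        omega
    have hiC' : n * (i + 1) ≤ n * C.len := Nat.mul_le_mul_left _ (by omega)
    rcases Nat.eq_zero_or_pos r with h0 | h0
    · -- k = n*i, pts k = C.pts i, pts (k+1) = f^[n-1] (C.pts (i+1))
      have e1 : k = n * i - 0 := by omega
      have e2 : k + 1 = n * (i + 1) - (n - 1) := by omega
      have p1 : spts f n C k = C.pts i := by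
        rw [e1, spts_eq hn C hn (by omega)]
        exact Function.iterate_zero_apply _ _
      have p2 : spts f n C (k + 1) = f^[n-1] (C.pts (i + 1)) := by
        rw [e2]; exact spts_eq hn C (by omega) (by omega)
      show f (spts f n C (k + 1)) = spts f n C k
      rw [p1, p2, (Function.iterate_succ_apply' f (n-1) _).symm,
        show (n - 1).succ = n from by omega]
      exact C.isPre i hiC
    · -- k = n*(i+1) - (n - r)
      have e1 : k = n * (i + 1) - (n - r) := by omega
      have e2 : k + 1 = n * (i + 1) - (n - r - 1) := by omega
      have p1 : spts f n C k = f^[n - r] (C.pts (i + 1)) := by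
        rw [e1]; exact spts_eq hn C (by omega) (by omega)
      have p2 : spts f n C (k + 1) = f^[n - r - 1] (C.pts (i + 1)) := by
        rw [e2]; exact spts_eq hn C (by omega) (by omega)
      show f (spts f n C (k + 1)) = spts f n C k
      rw [p1, p2, (Function.iterate_succ_apply' f (n-r-1) _).symm,
        show (n - r - 1).succ = n - r from by omega]

omit [MetricSpace X] in
lemma stretch_pts_eq {f : X → X} {n : ℕ} (hn : 0 < n) (C : Prehistory (f^[n]))
    {i j : ℕ} (hj : j < n) (hji : j ≤ n * i) :
    (stretch f n C).pts (n * i - j) = f^[j] (C.pts i) := spts_eq hn C hj hji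

omit [MetricSpace X] in
lemma stretch_len {f : X → X} {n : ℕ} (C : Prehistory (f^[n])) :
    (stretch f n C).len = n * C.len := rfl

/-- sample every n-th point of an `f`-prehistory to get an `f^[n]`-prehistory -/
def sample (f : X → X) (n : ℕ) (C : Prehistory f) : Prehistory (f^[n]) where
  len := C.len / n
  pts i := C.pts (n * i)
  isPre := by
    intro i hi
    have hn : 0 < n := by
      rcases Nat.eq_zero_or_pos n with h | h
      · subst h; simp at hi
      · exact h
    have h1 : n * (i + 1) ≤ C.len := by
      calc n * (i + 1) ≤ n * (C.len / n) := Nat.mul_le_mul_left _ (by omega)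
      _ ≤ C.len := Nat.mul_div_le _ _
    have hni : n * (i + 1) = n * i + n := by ring
    have := chain_iterate C.isPre (n * i) n (by omega)
    rw [show n * i + n = n * (i + 1) by ring] at this
    exact this

section Lemmas

variable {f g : X → X}

lemma sample_shadow {n : ℕ} (hn : 0 < n) (C : Prehistory f) {ε : ℝ} {z : X}
    (hz : z ∈ C.shadow ε) : z ∈ (sample f n C).shadow ε := by
  obtain ⟨zs, h0, hch, hd⟩ := hz
  refine ⟨fun i => zs (n * i), by simpa using h0, ?_, ?_⟩
  · intro i hi
    have hni : n * (i + 1) = n * i + n := by ring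
    have h1 : n * (i + 1) ≤ C.len := by
      calc n * (i + 1) ≤ n * (C.len / n) := Nat.mul_le_mul_left _ (by
        exact hi)
      _ ≤ C.len := Nat.mul_div_le _ _
    have := chain_iterate hch (n * i) n (by omega)
    rw [show n * i + n = n * (i + 1) by ring] at this
    exact this
  · intro i hi
    have h1 : n * i ≤ C.len := by
      calc n * i ≤ n * (C.len / n) := Nat.mul_le_mul_left _ hi
      _ ≤ C.len := Nat.mul_div_le _ _
    exact hd (n * i) h1

lemma stretch_shadow {n : ℕ} (hn : 0 < n) {ε δ : ℝ}
    (hδ : ∀ x y : X, dist x y < δ → ∀ j < n, dist (f^[j] x) (f^[j] y) < ε)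
    (C : Prehistory (f^[n])) {z : X} (hz : z ∈ C.shadow δ) :
    z ∈ (stretch f n C).shadow ε := by
  obtain ⟨zs, h0, hch, hd⟩ := hz
  set CC : Prehistory (f^[n]) := ⟨C.len, zs, hch⟩ with hCC
  have hlen : (stretch f n CC).len = (stretch f n C).len := rfl
  refine ⟨(stretch f n CC).pts, ?_, fun i hi => (stretch f n CC).isPre i hi, ?_⟩
  · have : (stretch f n CC).pts (n * 0 - 0) = f^[0] (CC.pts 0) :=
      stretch_pts_eq hn CC hn (by simp)
    rw [← h0]; simpa using this
  · intro k hk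
    have hdm : n * ((k + n - 1) / n) + (k + n - 1) % n = k + n - 1 :=
      Nat.div_add_mod _ n
    have hm : (k + n - 1) % n < n := Nat.mod_lt _ hn
    set i := (k + n - 1) / n with hid
    have hk1 : k ≤ n * i := by omega
    have hk2 : n * i ≤ k + n - 1 := by omega
    set j := n * i - k with hjd
    have hj : j < n := by omega
    have hji : j ≤ n * i := by omega
    have hiC : i ≤ C.len := by
      rcases Nat.lt_or_ge C.len i with h | h
      · exfalso
        have h1 : n * (C.len + 1) ≤ n * i := Nat.mul_le_mul_left _ (by omega)
        have h2 : n * (C.len + 1) = n * C.len + n := by ring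
        have : k ≤ n * C.len := hk
        omega
      · exact h
    have e : k = n * i - j := by omega
    rw [e, stretch_pts_eq hn CC hj hji, stretch_pts_eq hn C hj hji]
    exact hδ (zs i) (C.pts i) (hd i hiC) j hj

lemma sum_block (ψ : X → ℝ) {n M L : ℕ} (hn : 0 < n) {zs : ℕ → X}
    (h : ∀ i < L, f (zs (i + 1)) = zs i) (hML : n * M ≤ L) :
    ∑ i ∈ Finset.range M, birkhoff f ψ n (zs (n * (i + 1))) =
      ∑ k ∈ Finset.range (n * M), ψ (zs (k + 1)) := by
  have step : ∀ i ∈ Finset.range M,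
      birkhoff f ψ n (zs (n * (i + 1))) =
        ∑ j ∈ Finset.range n, ψ (zs (n * (i + 1) - j)) := by
    intro i hi
    rw [birkhoff]
    refine Finset.sum_congr rfl fun j hj => ?_
    rw [Finset.mem_range] at hj
    have h1 : n * (i + 1) ≤ n * M := Nat.mul_le_mul_left _ (by
      rw [Finset.mem_range] at hi; omega)
    have h2 : n ≤ n * (i + 1) := Nat.le_mul_of_pos_right _ (by omega)
    have := chain_iterate h (n * (i + 1) - j) j (by omega)
    rw [show n * (i + 1) - j + j = n * (i + 1) by omega] at this
    rw [this]
  rw [Finset.sum_congr rfl step, ← Finset.sum_product']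
  refine Finset.sum_nbij' (fun p => n * p.1 + (n - 1 - p.2))
    (fun k => (k / n, n - 1 - k % n)) ?_ ?_ ?_ ?_ ?_
  · rintro ⟨i, j⟩ hij
    simp only [Finset.mem_product, Finset.mem_range] at hij
    dsimp only
    rw [Finset.mem_range]
    have h1 : n * (i + 1) ≤ n * M := Nat.mul_le_mul_left _ (by omega)
    have h2 : n * (i + 1) = n * i + n := by ring
    omega
  · intro k hk
    rw [Finset.mem_range] at hk
    simp only [Finset.mem_product, Finset.mem_range]
    have hdm : n * (k / n) + k % n = k := Nat.div_add_mod _ _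
    have hm : k % n < n := Nat.mod_lt _ hn
    constructor
    · rcases Nat.lt_or_ge (k / n) M with h | h
      · exact h
      · exfalso
        have := Nat.mul_le_mul_left n h
        omega
    · omega
  · rintro ⟨i, j⟩ hij
    simp only [Finset.mem_product, Finset.mem_range] at hij
    have hdiv : (n * i + (n - 1 - j)) / n = i := by
      rw [Nat.mul_add_div hn, Nat.div_eq_of_lt (by omega)]; omega
    have hmod : (n * i + (n - 1 - j)) % n = n - 1 - j := by
      rw [Nat.mul_add_mod, Nat.mod_eq_of_lt (by omega)]
    dsimp only
    rw [hdiv, hmod, show n - 1 - (n - 1 - j) = j from by omega]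
  · intro k hk
    rw [Finset.mem_range] at hk
    have hdm : n * (k / n) + k % n = k := Nat.div_add_mod _ _
    have hm : k % n < n := Nat.mod_lt _ hn
    dsimp only
    omega
  · rintro ⟨i, j⟩ hij
    simp only [Finset.mem_product, Finset.mem_range] at hij
    dsimp only
    have h2 : n * (i + 1) = n * i + n := by ring
    rw [show n * (i + 1) - j = n * i + (n - 1 - j) + 1 from by omega]

end Lemmas

section Sums

variable {f : X → X}

lemma birkhoff_abs_le {ψ : X → ℝ} {B : ℝ} (hB : ∀ x, |ψ x| ≤ B) (n : ℕ) (x : X) :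
    |birkhoff f ψ n x| ≤ n * B := by
  calc |birkhoff f ψ n x| ≤ ∑ i ∈ Finset.range n, |ψ (f^[i] x)| :=
        Finset.abs_sum_le_sum_abs _ _
  _ ≤ ∑ _i ∈ Finset.range n, B := Finset.sum_le_sum fun i _ => hB _
  _ = n * B := by simp [Finset.sum_const, nsmul_eq_mul]

lemma consSum_stretch {n : ℕ} (hn : 0 < n) (C : Prehistory (f^[n])) (ψ : X → ℝ) :
    (stretch f n C).consSum ψ + birkhoff f ψ n (C.pts 0) =
      C.consSum (birkhoff f ψ n) + ψ (C.pts 0) := by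
  have hD0 : (stretch f n C).pts 0 = C.pts 0 := by
    have := stretch_pts_eq hn C (i := 0) (j := 0) hn (by simp)
    simpa using this
  have hblock := sum_block (f := f) ψ hn (stretch f n C).isPre
      (le_of_eq (stretch_len C).symm)
  have hDpts : ∀ i, (stretch f n C).pts (n * (i + 1)) = C.pts (i + 1) := by
    intro i
    have := stretch_pts_eq hn C (i := i + 1) (j := 0) hn (by simp)
    simpa using this
  rw [Prehistory.consSum, Prehistory.consSum, stretch_len,
    Finset.sum_range_succ' (fun k => ψ ((stretch f n C).pts k)),
    Finset.sum_range_succ' (fun i => birkhoff f ψ n (C.pts i)), ← hblock, hD0]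
  rw [Finset.sum_congr rfl fun i _ => congrArg (birkhoff f ψ n) (hDpts i)]
  ring

lemma consSum_sample {n : ℕ} (hn : 0 < n) (C : Prehistory f) {ψ : X → ℝ} {B : ℝ}
    (hB : ∀ x, |ψ x| ≤ B) :
    (sample f n C).consSum (birkhoff f ψ n) ≤ C.consSum ψ + (2 * n + 1) * B := by
  have hB0 : 0 ≤ B := le_trans (abs_nonneg _) (hB (C.pts 0))
  set M := C.len / n with hM
  have hML : n * M ≤ C.len := Nat.mul_div_le _ _
  have hblock := sum_block (f := f) ψ hn C.isPre hML
  have h1 : (sample f n C).consSum (birkhoff f ψ n) =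
      (∑ k ∈ Finset.range (n * M), ψ (C.pts (k + 1))) + birkhoff f ψ n (C.pts 0) := by
    rw [Prehistory.consSum]
    have hlen : (sample f n C).len = M := rfl
    rw [hlen, Finset.sum_range_succ' (fun i => birkhoff f ψ n ((sample f n C).pts i))]
    have hpts : ∀ i, (sample f n C).pts i = C.pts (n * i) := fun _ => rfl
    simp only [hpts, Nat.mul_zero]
    rw [← hblock]
  have h2 : C.consSum ψ =
      (∑ k ∈ Finset.range C.len, ψ (C.pts (k + 1))) + ψ (C.pts 0) := by
    rw [Prehistory.consSum, Finset.sum_range_succ' (fun k => ψ (C.pts k))]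
  have hsplit : ∑ k ∈ Finset.range C.len, ψ (C.pts (k + 1)) =
      (∑ k ∈ Finset.range (n * M), ψ (C.pts (k + 1))) +
        ∑ k ∈ Finset.Ico (n * M) C.len, ψ (C.pts (k + 1)) := by
    rw [Finset.range_eq_Ico, ← Finset.sum_Ico_consecutive _ (Nat.zero_le _) hML,
      ← Finset.range_eq_Ico]
  have hcard : (Finset.Ico (n * M) C.len).card ≤ n := by
    rw [Nat.card_Ico, hM]
    have hdm : n * (C.len / n) + C.len % n = C.len := Nat.div_add_mod _ _
    have hm : C.len % n < n := Nat.mod_lt _ hn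
    omega
  have htail : -((n : ℝ) * B) ≤ ∑ k ∈ Finset.Ico (n * M) C.len, ψ (C.pts (k + 1)) := by
    have : ∑ k ∈ Finset.Ico (n * M) C.len, (-B) ≤
        ∑ k ∈ Finset.Ico (n * M) C.len, ψ (C.pts (k + 1)) :=
      Finset.sum_le_sum fun k _ => neg_le_of_abs_le (hB _)
    calc -((n : ℝ) * B) ≤ -((Finset.Ico (n * M) C.len).card * B) := by
          have : ((Finset.Ico (n * M) C.len).card : ℝ) ≤ (n : ℝ) := by
            exact_mod_cast hcard
          nlinarith
    _ = ∑ _k ∈ Finset.Ico (n * M) C.len, (-B) := by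
          simp [Finset.sum_const, nsmul_eq_mul, mul_comm]
    _ ≤ _ := this
  have hb0 : |birkhoff f ψ n (C.pts 0)| ≤ n * B := birkhoff_abs_le hB n _
  have hp0 : |ψ (C.pts 0)| ≤ B := hB _
  rw [h1, h2]
  have h3 := abs_le.mp hb0
  have h4 := abs_le.mp hp0
  rw [hsplit]
  linarith

end Sums

section Machine

lemma invMLim_zero_of (g₁ g₂ : X → X) (Φ : Prehistory g₂ → Prehistory g₁)
    (Y : Set X) (ε₁ ε₂ lam₁ lam₂ : ℝ) (ψ₁ ψ₂ : X → ℝ) (K : ℝ) (hK : 0 ≤ K)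
    (ν : ℕ → ℕ)
    (hsh : ∀ C : Prehistory g₂, C.shadow ε₂ ⊆ (Φ C).shadow ε₁)
    (hlen : ∀ N : ℕ, ∀ C : Prehistory g₂, ν N ≤ C.len → N ≤ (Φ C).len)
    (hterm : ∀ C : Prehistory g₂,
      Real.exp (-lam₁ * ((Φ C).len : ℝ) + (Φ C).consSum ψ₁) ≤
        K * Real.exp (-lam₂ * (C.len : ℝ) + C.consSum ψ₂))
    (h0 : invMLim g₂ lam₂ ψ₂ Y ε₂ = 0) :
    invMLim g₁ lam₁ ψ₁ Y ε₁ = 0 := by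
  rw [invMLim, ENNReal.iSup_eq_zero] at h0 ⊢
  intro N
  have h2 : invM g₂ lam₂ ψ₂ Y (ν N) ε₂ = 0 := h0 (ν N)
  by_contra hx
  replace hx : 0 < invM g₁ lam₁ ψ₁ Y N ε₁ := pos_iff_ne_zero.mpr hx
  obtain ⟨δ, hδ0, hδx⟩ := exists_between hx
  have hKfin : ENNReal.ofReal K ≠ ⊤ := ENNReal.ofReal_ne_top
  have hδ' : (0 : ℝ≥0∞) < δ / ENNReal.ofReal K := ENNReal.div_pos hδ0.ne' hKfin
  have hlt : invM g₂ lam₂ ψ₂ Y (ν N) ε₂ < δ / ENNReal.ofReal K := by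
    rw [h2]; exact hδ'
  rw [invM] at hlt
  obtain ⟨Γ, hΓ⟩ := iInf_lt_iff.mp hlt
  obtain ⟨hP, hΓlt⟩ := iInf_lt_iff.mp hΓ
  have hcov : ECovers (Φ '' Γ) Y ε₁ := by
    intro y hy
    obtain ⟨C, hC, hyC⟩ := Set.mem_iUnion₂.mp (hP.1 hy)
    exact Set.mem_iUnion₂.mpr ⟨Φ C, Set.mem_image_of_mem Φ hC, hsh C hyC⟩
  have hlen' : ∀ D ∈ Φ '' Γ, N ≤ D.len := by
    rintro D ⟨C, hC, rfl⟩
    exact hlen N C (hP.2 C hC)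
  have hineq1 : invM g₁ lam₁ ψ₁ Y N ε₁ ≤
      ∑' D : (Φ '' Γ : Set (Prehistory g₁)),
        ENNReal.ofReal (Real.exp (-lam₁ * (D.1.len : ℝ) + D.1.consSum ψ₁)) := by
    rw [invM]
    exact iInf₂_le (Φ '' Γ) ⟨hcov, hlen'⟩
  have hsurj : Surjective (fun C : Γ =>
      (⟨Φ C, Set.mem_image_of_mem Φ C.2⟩ : (Φ '' Γ : Set (Prehistory g₁)))) := by
    rintro ⟨D, C, hC, rfl⟩
    exact ⟨⟨C, hC⟩, rfl⟩
  have hineq2 :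
      ∑' D : (Φ '' Γ : Set (Prehistory g₁)),
        ENNReal.ofReal (Real.exp (-lam₁ * (D.1.len : ℝ) + D.1.consSum ψ₁)) ≤
      ∑' C : Γ,
        ENNReal.ofReal (Real.exp (-lam₁ * ((Φ C.1).len : ℝ) + (Φ C.1).consSum ψ₁)) :=
    ENNReal.tsum_le_tsum_comp_of_surjective hsurj _
  have hineq3 :
      ∑' C : Γ,
        ENNReal.ofReal (Real.exp (-lam₁ * ((Φ C.1).len : ℝ) + (Φ C.1).consSum ψ₁)) ≤
      ENNReal.ofReal K *
        ∑' C : Γ, ENNReal.ofReal (Real.exp (-lam₂ * (C.1.len : ℝ) + C.1.consSum ψ₂)) := by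
    rw [← ENNReal.tsum_mul_left]
    refine ENNReal.tsum_le_tsum fun C => ?_
    rw [← ENNReal.ofReal_mul hK]
    exact ENNReal.ofReal_le_ofReal (hterm C.1)
  have hfinal : invM g₁ lam₁ ψ₁ Y N ε₁ ≤ δ := by
    refine (hineq1.trans (hineq2.trans hineq3)).trans ?_
    calc ENNReal.ofReal K *
        ∑' C : Γ, ENNReal.ofReal (Real.exp (-lam₂ * (C.1.len : ℝ) + C.1.consSum ψ₂)) ≤
        ENNReal.ofReal K * (δ / ENNReal.ofReal K) := mul_le_mul_right hΓlt.le _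
    _ ≤ δ := ENNReal.mul_div_le
  exact absurd hfinal (not_le.mpr hδx)

/-- the set of `λ` with vanishing limit -/
def zset (g : X → X) (ψ : X → ℝ) (ε : ℝ) : Set ℝ :=
  {lam | invMLim g lam ψ Set.univ ε = 0}

lemma invPressEps_eq (g : X → X) (ψ : X → ℝ) (ε : ℝ) :
    invPressEps g ψ Set.univ ε = sInf ((fun l : ℝ => (l : EReal)) '' zset g ψ ε) := by
  rw [invPressEps]
  congr 1
  ext l
  constructor
  · rintro ⟨lam, rfl, h⟩; exact ⟨lam, h, rfl⟩
  · rintro ⟨lam, h, rfl⟩; exact ⟨lam, rfl, h⟩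

lemma zset_mono {g : X → X} {ψ : X → ℝ} {ε : ℝ} {lam lam' : ℝ} (h : lam ≤ lam')
    (hz : lam ∈ zset g ψ ε) : lam' ∈ zset g ψ ε := by
  refine invMLim_zero_of g g id Set.univ ε ε lam' lam ψ ψ 1 zero_le_one id
    (fun C => subset_rfl) (fun N C hc => hc) (fun C => ?_) hz
  rw [one_mul]
  apply Real.exp_le_exp.mpr
  simp only [id_eq]
  have : (0 : ℝ) ≤ (C.len : ℝ) := Nat.cast_nonneg _
  nlinarith

lemma mem_zset_of_lt {g : X → X} {ψ : X → ℝ} {ε r : ℝ}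
    (hP : invPressEps g ψ Set.univ ε = (r : EReal)) {s : ℝ} (h : r < s) :
    s ∈ zset g ψ ε := by
  have h1 : sInf ((fun l : ℝ => (l : EReal)) '' zset g ψ ε) < (s : EReal) := by
    rw [← invPressEps_eq, hP]
    exact_mod_cast h
  obtain ⟨l, hl, hls⟩ := sInf_lt_iff.mp h1
  obtain ⟨lam, hlam, rfl⟩ := hl
  have hls' : (lam : EReal) < (s : EReal) := hls
  exact zset_mono (le_of_lt (by exact_mod_cast hls')) hlam

lemma le_of_mem_zset {g : X → X} {ψ : X → ℝ} {ε r : ℝ}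
    (hP : invPressEps g ψ Set.univ ε = (r : EReal)) {s : ℝ} (h : s ∈ zset g ψ ε) :
    r ≤ s := by
  have h1 : invPressEps g ψ Set.univ ε ≤ (s : EReal) := by
    rw [invPressEps_eq]
    exact sInf_le ⟨s, h, rfl⟩
  rw [hP] at h1
  exact_mod_cast h1

lemma le_of_forall_zset {g : X → X} {ψ : X → ℝ} {ε r c : ℝ}
    (hP : invPressEps g ψ Set.univ ε = (r : EReal))
    (h : ∀ s : ℝ, c < s → s ∈ zset g ψ ε) : r ≤ c := by
  by_contra hc
  push_neg at hc
  have := le_of_mem_zset hP (h ((c + r) / 2) (by linarith))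
  linarith

end Machine


section Transfer

variable {g : X → X}

lemma birkhoff_smul (g : X → X) (ψ : X → ℝ) (a : ℝ) (n : ℕ) :
    birkhoff g (fun x => a * ψ x) n = fun x => a * birkhoff g ψ n x := by
  funext x
  rw [birkhoff, birkhoff, Finset.mul_sum]

lemma birkhoff_one (g : X → X) (ψ : X → ℝ) : birkhoff g ψ 1 = ψ := by
  funext x
  simp [birkhoff]

lemma birkhoff_continuous (hg : Continuous g) {ψ : X → ℝ} (hψ : Continuous ψ) (n : ℕ) :
    Continuous (birkhoff g ψ n) := by
  unfold birkhoff
  exact continuous_finset_sum _ fun i _ => hψ.comp (hg.iterate i)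

lemma birkhoff_le_neg {ψ : X → ℝ} {δ : ℝ} (h : ∀ x, ψ x ≤ -δ) (n : ℕ) (x : X) :
    birkhoff g ψ n x ≤ -((n : ℝ) * δ) := by
  calc birkhoff g ψ n x ≤ ∑ _i ∈ Finset.range n, (-δ) :=
        Finset.sum_le_sum fun i _ => h _
  _ = -((n : ℝ) * δ) := by rw [Finset.sum_const, Finset.card_range, nsmul_eq_mul]; ring

lemma birkhoff_comp (g : X → X) (ψ : X → ℝ) (n p : ℕ) :
    birkhoff (g^[n]) (birkhoff g ψ n) p = birkhoff g ψ (n * p) := by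
  rcases Nat.eq_zero_or_pos n with hn | hn
  · subst hn
    funext x
    simp [birkhoff]
  funext x
  rw [birkhoff]
  simp only [birkhoff]
  rw [← Finset.sum_product']
  refine Finset.sum_nbij' (fun q => n * q.1 + q.2) (fun k => (k / n, k % n)) ?_ ?_ ?_ ?_ ?_
  · rintro ⟨q, j⟩ hqj
    simp only [Finset.mem_product, Finset.mem_range] at hqj
    dsimp only
    rw [Finset.mem_range]
    have h1 : n * (q + 1) ≤ n * p := Nat.mul_le_mul_left _ (by omega)
    have h2 : n * (q + 1) = n * q + n := by ring
    omega
  · intro k hk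
    rw [Finset.mem_range] at hk
    simp only [Finset.mem_product, Finset.mem_range]
    have hdm : n * (k / n) + k % n = k := Nat.div_add_mod _ _
    have hm : k % n < n := Nat.mod_lt _ hn
    refine ⟨?_, hm⟩
    rcases Nat.lt_or_ge (k / n) p with h | h
    · exact h
    · exfalso
      have := Nat.mul_le_mul_left n h
      omega
  · rintro ⟨q, j⟩ hqj
    simp only [Finset.mem_product, Finset.mem_range] at hqj
    dsimp only
    have hdiv : (n * q + j) / n = q := by
      rw [Nat.mul_add_div hn, Nat.div_eq_of_lt hqj.2]; omega
    have hmod : (n * q + j) % n = j := by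
      rw [Nat.mul_add_mod, Nat.mod_eq_of_lt hqj.2]
    rw [hdiv, hmod]
  · intro k hk
    dsimp only
    have hdm : n * (k / n) + k % n = k := Nat.div_add_mod _ _
    omega
  · rintro ⟨q, j⟩ hqj
    simp only [Finset.mem_product, Finset.mem_range] at hqj
    dsimp only
    rw [← Function.iterate_mul, ← Function.iterate_add_apply, Nat.add_comm]

lemma zset_shift {ψ₁ ψ₂ : X → ℝ} {c ε lam : ℝ} (h : ∀ x, ψ₁ x ≤ ψ₂ x + c)
    (hz : lam ∈ zset g ψ₂ ε) : lam + c ∈ zset g ψ₁ ε := by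
  refine invMLim_zero_of g g id Set.univ ε ε (lam + c) lam ψ₁ ψ₂ (Real.exp c)
    (Real.exp_nonneg c) id (fun C => subset_rfl) (fun N C hc => hc) (fun C => ?_) hz
  rw [← Real.exp_add]
  apply Real.exp_le_exp.mpr
  simp only [id_eq]
  have hS : C.consSum ψ₁ ≤ C.consSum ψ₂ + ((C.len : ℝ) + 1) * c := by
    rw [Prehistory.consSum, Prehistory.consSum]
    calc ∑ i ∈ Finset.range (C.len + 1), ψ₁ (C.pts i) ≤
        ∑ i ∈ Finset.range (C.len + 1), (ψ₂ (C.pts i) + c) :=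
          Finset.sum_le_sum fun i _ => h _
    _ = ∑ i ∈ Finset.range (C.len + 1), ψ₂ (C.pts i) + ((C.len : ℝ) + 1) * c := by
          rw [Finset.sum_add_distrib, Finset.sum_const, Finset.card_range, nsmul_eq_mul]
          push_cast
          ring
  nlinarith [Nat.cast_nonneg (α := ℝ) C.len]

lemma zset_sample {n : ℕ} (hn : 0 < n) {ψ : X → ℝ} {B ε lam : ℝ}
    (hB : ∀ x, |ψ x| ≤ B) (hz : lam ∈ zset g ψ ε) :
    (n : ℝ) * lam ∈ zset (g^[n]) (birkhoff g ψ n) ε := by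
  refine invMLim_zero_of (g^[n]) g (sample g n) Set.univ ε ε ((n : ℝ) * lam) lam
    (birkhoff g ψ n) ψ (Real.exp (|lam| * n + (2 * n + 1) * B)) (Real.exp_nonneg _)
    (fun N => n * N) (fun C z hzz => sample_shadow hn C hzz) (fun N C hc => ?_)
    (fun C => ?_) hz
  · have h1 : (sample g n C).len = C.len / n := rfl
    rw [h1, Nat.le_div_iff_mul_le hn]
    have hc' : n * N ≤ C.len := hc
    rwa [Nat.mul_comm]
  · rw [← Real.exp_add]
    apply Real.exp_le_exp.mpr
    have hlen : (sample g n C).len = C.len / n := rfl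
    rw [hlen]
    have hS := consSum_sample hn C hB
    have hcast : (C.len : ℝ) = (n : ℝ) * ((C.len / n : ℕ) : ℝ) + ((C.len % n : ℕ) : ℝ) := by
      exact_mod_cast (Nat.div_add_mod C.len n).symm
    have hm : ((C.len % n : ℕ) : ℝ) < (n : ℝ) := by
      exact_mod_cast Nat.mod_lt _ hn
    have hm0 : (0 : ℝ) ≤ ((C.len % n : ℕ) : ℝ) := Nat.cast_nonneg _
    have key : lam * ((C.len % n : ℕ) : ℝ) ≤ |lam| * n := by
      have h1 : lam * ((C.len % n : ℕ) : ℝ) ≤ |lam| * ((C.len % n : ℕ) : ℝ) :=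
        mul_le_mul_of_nonneg_right (le_abs_self lam) hm0
      have h2 : |lam| * ((C.len % n : ℕ) : ℝ) ≤ |lam| * n :=
        mul_le_mul_of_nonneg_left hm.le (abs_nonneg lam)
      linarith
    have e : ((n : ℝ) * lam) * ((C.len / n : ℕ) : ℝ) =
        lam * (C.len : ℝ) - lam * ((C.len % n : ℕ) : ℝ) := by
      linear_combination (-lam) * hcast
    linarith

lemma zset_stretch {n : ℕ} (hn : 0 < n) {ψ : X → ℝ} {B ε δ lam : ℝ}
    (hB : ∀ x, |ψ x| ≤ B)
    (hδ : ∀ x y : X, dist x y < δ → ∀ j < n, dist (g^[j] x) (g^[j] y) < ε)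
    (hz : (n : ℝ) * lam ∈ zset (g^[n]) (birkhoff g ψ n) δ) : lam ∈ zset g ψ ε := by
  refine invMLim_zero_of g (g^[n]) (stretch g n) Set.univ ε δ lam ((n : ℝ) * lam)
    ψ (birkhoff g ψ n) (Real.exp (((n : ℝ) + 1) * B)) (Real.exp_nonneg _) id
    (fun C z hzz => stretch_shadow hn hδ C hzz) (fun N C hc => ?_) (fun C => ?_) hz
  · rw [stretch_len]
    exact le_trans hc (Nat.le_mul_of_pos_left _ hn)
  · rw [← Real.exp_add]
    apply Real.exp_le_exp.mpr
    rw [stretch_len]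
    have hid := consSum_stretch hn C ψ
    have hb1 : |ψ (C.pts 0)| ≤ B := hB _
    have hb2 : |birkhoff g ψ n (C.pts 0)| ≤ (n : ℝ) * B := birkhoff_abs_le hB n _
    have hcast : ((n * C.len : ℕ) : ℝ) = (n : ℝ) * (C.len : ℝ) := by push_cast; ring
    rw [hcast]
    have h3 := abs_le.mp hb1
    have h4 := abs_le.mp hb2
    nlinarith

lemma invPressEps_bot [IsEmpty X] (g : X → X) (ψ : X → ℝ) (Y : Set X) (ε : ℝ) (r : ℝ) :
    invPressEps g ψ Y ε ≠ (r : EReal) := by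
  have hz : ∀ lam : ℝ, invMLim g lam ψ Y ε = 0 := by
    intro lam
    rw [invMLim, ENNReal.iSup_eq_zero]
    intro N
    have hM : invM g lam ψ Y N ε ≤ 0 := by
      rw [invM]
      have hco : ECovers (∅ : Set (Prehistory g)) Y ε ∧
          ∀ C ∈ (∅ : Set (Prehistory g)), N ≤ C.len := by
        constructor
        · intro y _
          exact isEmptyElim y
        · intro C hC
          exact absurd hC (Set.notMem_empty C)
      refine le_trans (iInf₂_le (∅ : Set (Prehistory g)) hco) ?_
      rw [tsum_empty]
    exact le_antisymm hM (by simp)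
  intro hr
  have h1 : ∀ lam : ℝ, invPressEps g ψ Y ε ≤ (lam : EReal) := by
    intro lam
    rw [invPressEps]
    exact sInf_le ⟨lam, rfl, hz lam⟩
  have h2 := h1 (r - 1)
  rw [hr] at h2
  have : r ≤ r - 1 := by exact_mod_cast h2
  linarith

lemma exists_unif {n : ℕ} (hg : Continuous g) [CompactSpace X] {ε : ℝ} (hε : 0 < ε) :
    ∃ δ : ℝ, 0 < δ ∧ ∀ x y : X, dist x y < δ → ∀ j < n, dist (g^[j] x) (g^[j] y) < ε := by
  have hF : Continuous (fun x : X => fun j : Fin n => g^[(j : ℕ)] x) :=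
    continuous_pi fun j => hg.iterate _
  have hUC : UniformContinuous (fun x : X => fun j : Fin n => g^[(j : ℕ)] x) :=
    CompactSpace.uniformContinuous_of_continuous hF
  obtain ⟨δ, hδ0, hδ⟩ := Metric.uniformContinuous_iff.mp hUC ε hε
  refine ⟨δ, hδ0, fun x y hxy j hj => ?_⟩
  have hd := hδ hxy
  have hcoord := dist_le_pi_dist (fun j : Fin n => g^[(j : ℕ)] x)
    (fun j : Fin n => g^[(j : ℕ)] y) ⟨j, hj⟩
  dsimp only at hcoord
  exact lt_of_le_of_lt hcoord hd

end Transfer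

theorem stmt13 [CompactSpace X] (f : X → X) (hf : Continuous f) (hfs : Surjective f)
    (φ : X → ℝ) (hφ : Continuous φ) (hneg : ∀ x : X, φ x < 0)
    (hfin : ∀ n : ℕ, 1 ≤ n → ∀ ε : ℝ, 0 < ε → ∀ ψ : X → ℝ, Continuous ψ →
      ∃ r : ℝ, invPressEps (f^[n]) ψ Set.univ ε = (r : EReal))
    (hfin' : ∀ n : ℕ, 1 ≤ n → ∀ ψ : X → ℝ, Continuous ψ →
      ∃ r : ℝ, invPress (f^[n]) ψ Set.univ = (r : EReal))
    (teps : ℕ → ℝ → ℝ) (t : ℕ → ℝ)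
    (hteps : ∀ n : ℕ, 1 ≤ n → ∀ ε : ℝ, 0 < ε →
      invPressEps (f^[n]) (fun x => teps n ε * birkhoff f φ n x) Set.univ ε = (0 : EReal))
    (ht : ∀ n : ℕ, 1 ≤ n →
      invPress (f^[n]) (fun x => t n * birkhoff f φ n x) Set.univ = (0 : EReal)) :
    (∀ n p : ℕ, 1 ≤ n → 1 ≤ p → ∀ ε : ℝ, 0 < ε → teps (n * p) ε ≤ teps n ε) ∧
      ∀ n : ℕ, 1 ≤ n → t n = t 1 := by
  -- X is nonempty
  have hne : Nonempty X := by
    by_contra h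
    rw [not_nonempty_iff] at h
    obtain ⟨r, hr⟩ := hfin 1 le_rfl 1 one_pos φ hφ
    exact invPressEps_bot _ _ _ _ r hr
  haveI := hne
  -- φ is bounded away from 0
  obtain ⟨x₀, -, hx₀⟩ := isCompact_univ.exists_isMaxOn Set.univ_nonempty hφ.continuousOn
  set δ₀ : ℝ := -φ x₀ with hδ₀def
  have hδ₀ : 0 < δ₀ := by
    have := hneg x₀
    rw [hδ₀def]
    linarith
  have hφle : ∀ x, φ x ≤ -δ₀ := by
    intro x
    have := hx₀ (Set.mem_univ x)
    rw [hδ₀def]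
    simpa using this
  -- φ is bounded
  obtain ⟨B₀, hB₀'⟩ := isCompact_univ.exists_bound_of_continuousOn hφ.continuousOn
  have hB : ∀ x, |φ x| ≤ B₀ := by
    intro x
    have := hB₀' x (Set.mem_univ x)
    rwa [Real.norm_eq_abs] at this
  constructor
  · -- Part 1
    intro n p hn hp ε hε
    have hnp : 1 ≤ n * p := Nat.one_le_iff_ne_zero.mpr (by positivity)
    have hppos : 0 < p := hp
    have hnppos : (0:ℝ) < (p : ℝ) := by exact_mod_cast hp
    set s := teps n ε with hsdef
    set s' := teps (n * p) ε with hs'def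
    set ψg : X → ℝ := fun x => s * birkhoff f φ n x with hψgdef
    have hψgB : ∀ x, |ψg x| ≤ |s| * ((n : ℝ) * B₀) := by
      intro x
      rw [hψgdef]
      simp only
      rw [abs_mul]
      exact mul_le_mul_of_nonneg_left (birkhoff_abs_le hB n x) (abs_nonneg _)
    have hP0 : invPressEps (f^[n]) ψg Set.univ ε = ((0:ℝ) : EReal) := by
      rw [EReal.coe_zero]
      exact hteps n hn ε hε
    have hkey : birkhoff (f^[n]) ψg p = fun x => s * birkhoff f φ (n * p) x := by
      rw [hψgdef, birkhoff_smul (f^[n]) (birkhoff f φ n) s p, birkhoff_comp f φ n p]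
    have hiter : (f^[n])^[p] = f^[n * p] := (Function.iterate_mul f n p).symm
    obtain ⟨r', hr'⟩ := hfin (n * p) hnp ε hε (fun x => s * birkhoff f φ (n * p) x)
      (continuous_const.mul (birkhoff_continuous hf hφ _))
    have hr'le : r' ≤ 0 := by
      apply le_of_forall_zset hr'
      intro tt htt
      have h1 := zset_sample (g := f^[n]) hppos hψgB
        (mem_zset_of_lt hP0 (show (0:ℝ) < tt / p by positivity))
      rw [hkey, hiter] at h1
      have h2 : (p : ℝ) * (tt / p) = tt := by field_simp
      rwa [h2] at h1
    have hP0' : invPressEps (f^[n * p]) (fun x => s' * birkhoff f φ (n * p) x)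
        Set.univ ε = ((0:ℝ) : EReal) := by
      rw [EReal.coe_zero]
      exact hteps (n * p) hnp ε hε
    by_contra hlt
    push_neg at hlt
    set c : ℝ := (s - s') * (((n * p : ℕ) : ℝ) * δ₀) with hcdef
    have hnpR : (0:ℝ) < ((n * p : ℕ) : ℝ) := by exact_mod_cast hnp
    have hc0 : c < 0 := by
      rw [hcdef]
      apply mul_neg_of_neg_of_pos (by linarith) (by positivity)
    have hχ : ∀ x, birkhoff f φ (n * p) x ≤ -(((n * p : ℕ) : ℝ) * δ₀) :=
      birkhoff_le_neg hφle _
    have hshift : ∀ x, s' * birkhoff f φ (n * p) x ≤ s * birkhoff f φ (n * p) x + c := by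
      intro x
      have h1 : (s' - s) * birkhoff f φ (n * p) x ≤
          (s' - s) * (-(((n * p : ℕ) : ℝ) * δ₀)) :=
        mul_le_mul_of_nonneg_left (hχ x) (by linarith)
      rw [hcdef]
      nlinarith
    have hfinal : ∀ η : ℝ, 0 < η → (0:ℝ) ≤ η + c := by
      intro η hη
      have hmem : η ∈ zset (f^[n * p]) (fun x => s * birkhoff f φ (n * p) x) ε :=
        mem_zset_of_lt hr' (by linarith)
      have h2 := zset_shift hshift hmem
      exact le_of_mem_zset hP0' h2
    have := hfinal (-c / 2) (by linarith)
    linarith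
  · -- Part 2
    intro n hn
    have hnpos : 0 < n := hn
    have hnR : (0:ℝ) < (n : ℝ) := by exact_mod_cast hn
    -- generic claim: if invPress f (a * φ) = 0 and invPress f (b * φ) = 0 then ¬ a < b
    have key : ∀ a b : ℝ,
        invPress f (fun x => a * φ x) Set.univ = ((0:ℝ) : EReal) →
        invPress f (fun x => b * φ x) Set.univ = ((0:ℝ) : EReal) → ¬ a < b := by
      intro a b hA hB' hab
      set c : ℝ := (a - b) * δ₀ with hcdef
      have hc0 : c < 0 := mul_neg_of_neg_of_pos (by linarith) hδ₀
      have hshift : ∀ x, b * φ x ≤ a * φ x + c := by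
        intro x
        have h1 : (b - a) * φ x ≤ (b - a) * (-δ₀) :=
          mul_le_mul_of_nonneg_left (hφle x) (by linarith)
        rw [hcdef]
        nlinarith
      have hsup : invPress f (fun x => b * φ x) Set.univ ≤ ((c : ℝ) : EReal) := by
        refine iSup₂_le fun ε hε => ?_
        obtain ⟨ra, hra⟩ := hfin 1 le_rfl ε hε (fun x => a * φ x)
          (continuous_const.mul hφ)
        obtain ⟨rb, hrb⟩ := hfin 1 le_rfl ε hε (fun x => b * φ x)
          (continuous_const.mul hφ)
        rw [Function.iterate_one] at hra hrb
        have hra0 : ra ≤ 0 := by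
          have h1 : invPressEps f (fun x => a * φ x) Set.univ ε ≤
              invPress f (fun x => a * φ x) Set.univ :=
            le_iSup₂ (f := fun ε (_ : 0 < ε) =>
              invPressEps f (fun x => a * φ x) Set.univ ε) ε hε
          rw [hra, hA] at h1
          exact_mod_cast h1
        have hrbc : rb ≤ c := by
          have : ∀ η : ℝ, 0 < η → rb ≤ η + c := by
            intro η hη
            have hmem : η ∈ zset f (fun x => a * φ x) ε :=
              mem_zset_of_lt hra (by linarith)
            exact le_of_mem_zset hrb (zset_shift hshift hmem)
          by_contra hcon
          push_neg at hcon
          have := this ((rb - c) / 2) (by linarith)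
          linarith
        rw [hrb]
        exact_mod_cast hrbc
      rw [hB'] at hsup
      have : (0:ℝ) ≤ c := by exact_mod_cast hsup
      linarith
    -- invPress f (t n * φ) = 0
    set ψ : X → ℝ := fun x => t n * φ x with hψdef
    have hψc : Continuous ψ := continuous_const.mul hφ
    have hψB : ∀ x, |ψ x| ≤ |t n| * B₀ := by
      intro x
      rw [hψdef]
      simp only
      rw [abs_mul]
      exact mul_le_mul_of_nonneg_left (hB x) (abs_nonneg _)
    have hbs : birkhoff f ψ n = fun x => t n * birkhoff f φ n x :=
      birkhoff_smul f φ (t n) n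
    have hPn : invPress (f^[n]) (birkhoff f ψ n) Set.univ = ((0:ℝ) : EReal) := by
      rw [hbs, EReal.coe_zero]
      exact ht n hn
    obtain ⟨R, hR⟩ := hfin' 1 le_rfl ψ hψc
    rw [Function.iterate_one] at hR
    have hR0 : 0 ≤ R := by
      have hsup : invPress (f^[n]) (birkhoff f ψ n) Set.univ ≤
          (((n : ℝ) * R : ℝ) : EReal) := by
        refine iSup₂_le fun ε hε => ?_
        obtain ⟨r2, hr2⟩ := hfin n hn ε hε (birkhoff f ψ n)
          (birkhoff_continuous hf hψc n)
        obtain ⟨r1, hr1⟩ := hfin 1 le_rfl ε hε ψ hψc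
        rw [Function.iterate_one] at hr1
        have hr1R : r1 ≤ R := by
          have h1 : invPressEps f ψ Set.univ ε ≤ invPress f ψ Set.univ :=
            le_iSup₂ (f := fun ε (_ : 0 < ε) => invPressEps f ψ Set.univ ε) ε hε
          rw [hr1, hR] at h1
          exact_mod_cast h1
        have h2 : r2 ≤ (n : ℝ) * r1 := by
          apply le_of_forall_zset hr2
          intro tt htt
          have hlt : r1 < tt / n := by
            rw [lt_div_iff₀ hnR]
            linarith [htt]
          have h3 := zset_sample (g := f) hnpos hψB (mem_zset_of_lt hr1 hlt)
          have h4 : (n : ℝ) * (tt / n) = tt := by field_simp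
          rwa [h4] at h3
        rw [hr2]
        have : r2 ≤ (n : ℝ) * R := by nlinarith
        exact_mod_cast this
      rw [hPn] at hsup
      have : (0:ℝ) ≤ (n : ℝ) * R := by exact_mod_cast hsup
      nlinarith
    have hR1 : R ≤ 0 := by
      have hsup : invPress f ψ Set.univ ≤ ((0 : ℝ) : EReal) := by
        refine iSup₂_le fun ε hε => ?_
        obtain ⟨δ, hδ0, hδ⟩ := exists_unif (n := n) hf hε
        obtain ⟨r2, hr2⟩ := hfin n hn δ hδ0 (birkhoff f ψ n)
          (birkhoff_continuous hf hψc n)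
        have hr2le : r2 ≤ 0 := by
          have h1 : invPressEps (f^[n]) (birkhoff f ψ n) Set.univ δ ≤
              invPress (f^[n]) (birkhoff f ψ n) Set.univ :=
            le_iSup₂ (f := fun ε (_ : 0 < ε) =>
              invPressEps (f^[n]) (birkhoff f ψ n) Set.univ ε) δ hδ0
          rw [hr2, hPn] at h1
          exact_mod_cast h1
        obtain ⟨r1, hr1⟩ := hfin 1 le_rfl ε hε ψ hψc
        rw [Function.iterate_one] at hr1
        have hr1le : r1 ≤ 0 := by
          apply le_of_forall_zset hr1
          intro tt htt
          have hmem : (n : ℝ) * tt ∈ zset (f^[n]) (birkhoff f ψ n) δ :=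
            mem_zset_of_lt hr2 (by nlinarith)
          exact zset_stretch hnpos hψB hδ hmem
        rw [hr1]
        exact_mod_cast hr1le
      rw [hR] at hsup
      exact_mod_cast hsup
    have hReq : R = 0 := le_antisymm hR1 hR0
    have hA : invPress f (fun x => t n * φ x) Set.univ = ((0:ℝ) : EReal) := by
      rw [← hψdef, hR, hReq]
    have hB1 : invPress f (fun x => t 1 * φ x) Set.univ = ((0:ℝ) : EReal) := by
      have h1 := ht 1 le_rfl
      rw [Function.iterate_one, birkhoff_one] at h1
      rw [EReal.coe_zero]
      exact h1
    by_contra hne'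
    rcases lt_or_gt_of_ne hne' with h | h
    · exact key (t n) (t 1) hA hB1 h
    · exact key (t 1) (t n) hB1 hA h
end

section
/- Let (X,d) be a compact metric space, f : X → X a continuous surjective map, and φ : X → ℝ a continuous function that is strictly negative on X. For n ≥ 1 let φₙ(y) := φ(y) + φ(fy) + … + φ(f^{n−1}y) be the n-th Birkhoff sum. Then for every t ∈ ℝ and every integer n ≥ 1, the inverse pressure of t·φₙ with respect to the iterate fⁿ satisfies P⁻_{fⁿ}(t·φₙ, X) = n · P⁻_f(t·φ, X). -/
open Filter Set Function
open scoped ENNReal NNReal BigOperators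

variable {X : Type*} [MetricSpace X]

section Auxiliary
set_option linter.unusedSectionVars false

variable {X : Type*} [MetricSpace X] {f : X → X}

lemma iter_back {zs : ℕ → X} {L : ℕ} (h : ∀ i < L, f (zs (i+1)) = zs i) :
    ∀ j k, k + j ≤ L → f^[j] (zs (k + j)) = zs k := by
  intro j
  induction j with
  | zero => intro k _; simp
  | succ j ih =>
    intro k hk
    rw [Function.iterate_succ_apply]
    have h1 : f (zs (k + j + 1)) = zs (k + j) := h (k+j) (by omega)
    have h2 : k + (j+1) = (k+j)+1 := by omega
    rw [h2, h1]
    exact ih k (by omega)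

/-- backward interpolation of an `f^[n]`-backward orbit to an `f`-backward orbit -/
def interp (f : X → X) (n : ℕ) (ys : ℕ → X) (k : ℕ) : X :=
  f^[(n - k % n) % n] (ys ((k + n - 1) / n))

lemma aux_div_mul {n i : ℕ} (hn : 0 < n) : (n * i + n - 1) / n = i := by
  have h3 : n * i + n - 1 = (n - 1) + n * i := by omega
  rw [h3, Nat.add_mul_div_left _ _ hn, Nat.div_eq_of_lt (by omega), Nat.zero_add]

lemma aux_div_eval {n i r : ℕ} (hn : 0 < n) (h1 : 1 ≤ r) (h2 : r < n) :
    (n * i + r + n - 1) / n = i + 1 := by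
  have h3 : n * i + r + n - 1 = (r - 1) + n * (i+1) := by
    have : n * (i+1) = n * i + n := by ring
    omega
  rw [h3, Nat.add_mul_div_left _ _ hn, Nat.div_eq_of_lt (by omega), Nat.zero_add]

lemma aux_mod_eval {n i r : ℕ} (h2 : r < n) : (n * i + r) % n = r := by
  rw [show n*i + r = r + i*n by ring, Nat.add_mul_mod_self_right, Nat.mod_eq_of_lt h2]

lemma interp_mul {n : ℕ} (hn : 0 < n) (ys : ℕ → X) (i : ℕ) :
    interp f n ys (n * i) = ys i := by
  unfold interp
  have h1 : (n * i) % n = 0 := Nat.mul_mod_right n i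
  rw [h1, aux_div_mul hn]
  simp

lemma interp_eval {n : ℕ} (hn : 0 < n) (ys : ℕ → X) (i r : ℕ) (h1 : 1 ≤ r) (h2 : r ≤ n) :
    interp f n ys (n * i + r) = f^[n - r] (ys (i + 1)) := by
  rcases eq_or_lt_of_le h2 with rfl | hr
  · have h3 : r * i + r = r * (i+1) := by ring
    rw [h3, interp_mul hn]
    simp
  · unfold interp
    rw [aux_mod_eval hr, aux_div_eval hn h1 hr, Nat.mod_eq_of_lt (by omega)]

lemma interp_isPre {n : ℕ} (hn : 0 < n) (ys : ℕ → X) (m : ℕ)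
    (hys : ∀ i < m, f^[n] (ys (i+1)) = ys i) :
    ∀ k < n * m, f (interp f n ys (k+1)) = interp f n ys k := by
  intro k hk
  have hd := Nat.div_add_mod k n
  have hr : k % n < n := Nat.mod_lt _ hn
  set i := k / n with hi
  set r := k % n with hrdef
  have hk1 : k + 1 = n * i + (r + 1) := by omega
  rw [hk1, interp_eval hn ys i (r+1) (by omega) (by omega),
    ← Function.iterate_succ_apply' f (n - (r+1)) (ys (i+1))]
  have hnr : (n - (r+1)).succ = n - r := by omega
  rw [hnr]
  rcases Nat.eq_zero_or_pos r with hr0 | hr1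
  · have hkk : k = n * i := by omega
    have him : i < m := by
      by_contra hcon
      push_neg at hcon
      have : n * m ≤ n * i := Nat.mul_le_mul_left n hcon
      omega
    rw [hkk, interp_mul hn, hr0, Nat.sub_zero, hys i him]
  · have hkk : k = n * i + r := by omega
    rw [hkk, interp_eval hn ys i r hr1 (le_of_lt hr)]

lemma interp_div_le {n : ℕ} (hn : 0 < n) {k m : ℕ} (hk : k ≤ n * m) :
    (k + n - 1) / n ≤ m := by
  have h1 : k + n - 1 ≤ (n - 1) + n * m := by omega
  calc (k + n - 1) / n ≤ ((n-1) + n*m) / n := Nat.div_le_div_right h1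
    _ = m := by rw [Nat.add_mul_div_left _ _ hn, Nat.div_eq_of_lt (by omega), Nat.zero_add]

lemma interp_eq_self {n : ℕ} (hn : 0 < n) {zs : ℕ → X} {L : ℕ}
    (h : ∀ i < L, f (zs (i+1)) = zs i) {m : ℕ} (hm : n * m ≤ L) :
    ∀ k ≤ n * m, interp f n (fun i => zs (n * i)) k = zs k := by
  intro k hk
  have hd := Nat.div_add_mod k n
  have hr : k % n < n := Nat.mod_lt _ hn
  set i := k / n
  set r := k % n
  unfold interp
  rcases Nat.eq_zero_or_pos r with hr0 | hr1
  · have hkk : k = n * i := by omega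
    have h1 : (n * i) % n = 0 := Nat.mul_mod_right n i
    rw [hkk, h1, aux_div_mul hn]
    simp
  · have hkk : k = n * i + r := by omega
    rw [hkk, aux_mod_eval hr, aux_div_eval hn hr1 hr, Nat.mod_eq_of_lt (by omega)]
    show f^[n - r] (zs (n * (i+1))) = zs (n*i + r)
    have hin : n * i + r < n * m := by
      rcases eq_or_lt_of_le hk with he | hl
      · exfalso
        have h7 : (n*i + r) % n = r := aux_mod_eval hr
        rw [hkk] at he
        rw [he, Nat.mul_mod_right] at h7
        omega
      · omega
    have him : i + 1 ≤ m := by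
      by_contra hcon
      push_neg at hcon
      have h5 : n * m ≤ n * i := Nat.mul_le_mul_left n (by omega)
      omega
    have h6 : n * (i+1) ≤ L := le_trans (Nat.mul_le_mul_left n him) hm
    have h4 : n * (i+1) = (n*i + r) + (n - r) := by
      have : n * (i+1) = n*i + n := by ring
      omega
    rw [h4]
    exact iter_back h (n - r) (n*i + r) (by omega)

/-- Expanding an `f^[n]`-prehistory to an `f`-prehistory of length `n * len`. -/
def Prehistory.expand (n : ℕ) (hn : 0 < n) (C : Prehistory (f^[n])) : Prehistory f where
  len := n * C.len
  pts := interp f n C.pts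
  isPre := interp_isPre hn C.pts C.len C.isPre

/-- Compressing an `f`-prehistory to an `f^[n]`-prehistory of length `m`. -/
def Prehistory.compress (n : ℕ) (C : Prehistory f) (m : ℕ) (hm : n * m ≤ C.len) :
    Prehistory (f^[n]) where
  len := m
  pts := fun i => C.pts (n * i)
  isPre := by
    intro i hi
    have h4 : n * (i+1) = n*i + n := by ring
    have h5 : n * (i+1) ≤ C.len := le_trans (Nat.mul_le_mul_left n hi) hm
    show f^[n] (C.pts (n * (i+1))) = C.pts (n*i)
    rw [h4]
    exact iter_back C.isPre n (n*i) (by omega)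

lemma shadow_compress {n m : ℕ} (C : Prehistory f) (hm : n * m ≤ C.len) {ε : ℝ} :
    C.shadow ε ⊆ (C.compress n m hm).shadow ε := by
  rintro z ⟨zs, hz0, hpre, hdist⟩
  refine ⟨fun i => zs (n * i), by simpa using hz0, fun i hi => ?_, fun i hi => ?_⟩
  · show f^[n] (zs (n * (i+1))) = zs (n*i)
    have h4 : n * (i+1) = n*i + n := by ring
    have h5 : n * (i+1) ≤ C.len := le_trans (Nat.mul_le_mul_left n hi) hm
    rw [h4]
    exact iter_back hpre n (n*i) (by omega)
  · exact hdist (n*i) (le_trans (Nat.mul_le_mul_left n hi) hm)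

lemma shadow_expand {n : ℕ} (hn : 0 < n) (C : Prehistory (f^[n])) {δ ε : ℝ}
    (hδ : ∀ j ≤ n, ∀ a b : X, dist a b < δ → dist (f^[j] a) (f^[j] b) < ε) :
    C.shadow δ ⊆ (C.expand n hn).shadow ε := by
  rintro z ⟨zs, hz0, hpre, hdist⟩
  refine ⟨interp f n zs, ?_, interp_isPre hn zs C.len hpre, fun k hk => ?_⟩
  · have h := interp_mul (f := f) hn zs 0
    rw [Nat.mul_zero] at h
    rw [h, hz0]
  · show dist (f^[(n - k % n) % n] (zs ((k + n - 1)/n)))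
      (f^[(n - k % n) % n] (C.pts ((k + n - 1)/n))) < ε
    exact hδ _ (le_of_lt (Nat.mod_lt _ hn)) _ _ (hdist _ (interp_div_le hn hk))

lemma sum_grid (h : ℕ → ℝ) (n m : ℕ) :
    ∑ k ∈ Finset.range (n*m), h k
      = ∑ i ∈ Finset.range m, ∑ r ∈ Finset.range n, h (n*i + r) := by
  induction m with
  | zero => simp
  | succ m ih =>
    rw [Nat.mul_succ, Finset.sum_range_add, ih, Finset.sum_range_succ]

lemma consSum_expand {n : ℕ} (hn : 0 < n) (C : Prehistory (f^[n])) (t : ℝ) (φ : X → ℝ) :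
    (C.expand n hn).consSum (fun x => t * φ x) + t * birkhoff f φ n (C.pts 0)
      = C.consSum (fun x => t * birkhoff f φ n x) + t * φ (C.pts 0) := by
  show (∑ k ∈ Finset.range (n * C.len + 1), t * φ (interp f n C.pts k)) + _
    = (∑ i ∈ Finset.range (C.len + 1), t * birkhoff f φ n (C.pts i)) + _
  rw [Finset.sum_range_succ' (fun k => t * φ (interp f n C.pts k)) (n * C.len),
    Finset.sum_range_succ' (fun i => t * birkhoff f φ n (C.pts i)) C.len]
  have h0 : interp f n C.pts 0 = C.pts 0 := by
    have h := interp_mul (f := f) hn C.pts 0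
    rwa [Nat.mul_zero] at h
  rw [h0, sum_grid (fun k => t * φ (interp f n C.pts (k+1))) n C.len]
  have key : ∀ i ∈ Finset.range C.len,
      (∑ r ∈ Finset.range n, t * φ (interp f n C.pts (n*i + r + 1)))
        = t * birkhoff f φ n (C.pts (i+1)) := by
    intro i _
    calc ∑ r ∈ Finset.range n, t * φ (interp f n C.pts (n*i + r + 1))
        = ∑ r ∈ Finset.range n,
            (fun j => t * φ (f^[j] (C.pts (i+1)))) (n - 1 - r) := by
          apply Finset.sum_congr rfl
          intro r hr
          have hrn : r < n := Finset.mem_range.mp hr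
          have h1 : n*i + r + 1 = n*i + (r+1) := by omega
          rw [h1, interp_eval hn C.pts i (r+1) (by omega) (by omega)]
          have h2 : n - (r+1) = n - 1 - r := by omega
          rw [h2]
      _ = ∑ j ∈ Finset.range n, t * φ (f^[j] (C.pts (i+1))) :=
          Finset.sum_range_reflect (fun j => t * φ (f^[j] (C.pts (i+1)))) n
      _ = t * birkhoff f φ n (C.pts (i+1)) := by rw [birkhoff, Finset.mul_sum]
  rw [Finset.sum_congr rfl key, birkhoff, Finset.mul_sum]
  ring

lemma abs_range_sum_le (g : ℕ → ℝ) (c : ℕ) {M : ℝ} (h : ∀ j, |g j| ≤ M) :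
    |∑ j ∈ Finset.range c, g j| ≤ (c : ℝ) * M := by
  calc |∑ j ∈ Finset.range c, g j| ≤ ∑ j ∈ Finset.range c, |g j| :=
        Finset.abs_sum_le_sum_abs _ _
    _ ≤ ∑ _j ∈ Finset.range c, M := Finset.sum_le_sum (fun j _ => h j)
    _ = (c : ℝ) * M := by rw [Finset.sum_const, Finset.card_range, nsmul_eq_mul]

lemma consSum_expand_bound {n : ℕ} (hn : 0 < n) (C : Prehistory (f^[n])) (t : ℝ)
    (φ : X → ℝ) {M : ℝ} (hM0 : 0 ≤ M) (hM : ∀ x, |φ x| ≤ M) :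
    |(C.expand n hn).consSum (fun x => t * φ x)
      - C.consSum (fun x => t * birkhoff f φ n x)| ≤ |t| * ((n:ℝ)+1) * M := by
  have h := consSum_expand hn C t φ
  have hb : |birkhoff f φ n (C.pts 0)| ≤ (n : ℝ) * M := by
    rw [birkhoff]
    exact abs_range_sum_le _ n (fun j => hM _)
  have hφ0 := hM (C.pts 0)
  have hdiff : (C.expand n hn).consSum (fun x => t * φ x)
      - C.consSum (fun x => t * birkhoff f φ n x)
      = t * φ (C.pts 0) - t * birkhoff f φ n (C.pts 0) := by linarith
  rw [hdiff]
  calc |t * φ (C.pts 0) - t * birkhoff f φ n (C.pts 0)|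
      ≤ |t * φ (C.pts 0)| + |t * birkhoff f φ n (C.pts 0)| := abs_sub _ _
    _ = |t| * |φ (C.pts 0)| + |t| * |birkhoff f φ n (C.pts 0)| := by
        rw [abs_mul, abs_mul]
    _ ≤ |t| * M + |t| * ((n:ℝ) * M) := by
        have := abs_nonneg t
        gcongr
    _ = |t| * ((n:ℝ)+1) * M := by ring

lemma consSum_compress_le {n : ℕ} (hn : 0 < n) (C : Prehistory f) {m : ℕ}
    (hm : n*m ≤ C.len) (hml : C.len ≤ n*m + n) (t : ℝ) (φ : X → ℝ) {M : ℝ}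
    (hM0 : 0 ≤ M) (hM : ∀ x, |φ x| ≤ M) :
    (C.compress n m hm).consSum (fun x => t * birkhoff f φ n x)
      ≤ C.consSum (fun x => t * φ x) + 2 * (|t| * ((n:ℝ)+1) * M) := by
  have h1 := consSum_expand_bound hn (C.compress n m hm) t φ hM0 hM
  have h2 : ((C.compress n m hm).expand n hn).consSum (fun x => t * φ x)
      = ∑ k ∈ Finset.range (n*m+1), t * φ (C.pts k) := by
    show (∑ k ∈ Finset.range (n * m + 1), t * φ (interp f n (fun i => C.pts (n*i)) k)) = _
    apply Finset.sum_congr rfl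
    intro k hk
    rw [interp_eq_self hn C.isPre hm k (by
      have := Finset.mem_range.mp hk; omega)]
  have h3 : C.consSum (fun x => t * φ x)
      = (∑ k ∈ Finset.range (n*m+1), t * φ (C.pts k))
        + ∑ j ∈ Finset.range (C.len - n*m), t * φ (C.pts (n*m+1 + j)) := by
    show (∑ k ∈ Finset.range (C.len + 1), t * φ (C.pts k)) = _
    rw [show C.len + 1 = (n*m+1) + (C.len - n*m) by omega,
      Finset.sum_range_add]
  have h4 : |∑ j ∈ Finset.range (C.len - n*m), t * φ (C.pts (n*m+1 + j))|
      ≤ (n : ℝ) * (|t| * M) := by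
    calc |∑ j ∈ Finset.range (C.len - n*m), t * φ (C.pts (n*m+1 + j))|
        ≤ ((C.len - n*m : ℕ) : ℝ) * (|t| * M) := by
          apply abs_range_sum_le
          intro j
          rw [abs_mul]
          exact mul_le_mul_of_nonneg_left (hM _) (abs_nonneg t)
      _ ≤ (n : ℝ) * (|t| * M) := by
          apply mul_le_mul_of_nonneg_right _ (by positivity)
          exact_mod_cast (by omega : C.len - n*m ≤ n)
  rw [abs_le] at h1 h4
  have h5 : |t| * M ≤ |t| * ((n:ℝ)+1) * M := by nlinarith [abs_nonneg t, (by exact_mod_cast hn : (0:ℝ) < (n:ℝ))]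
  have h6 : (n:ℝ) * (|t| * M) ≤ |t| * ((n:ℝ)+1) * M := by nlinarith [abs_nonneg t]
  rw [h2] at h1
  linarith [h1.1, h1.2, h4.1, h4.2]

end Auxiliary
section Transfer
set_option linter.unusedSectionVars false

variable {X : Type*} [MetricSpace X]

lemma invM_transfer {f₁ f₂ : X → X} {lam₁ lam₂ : ℝ} {φ₁ φ₂ : X → ℝ} {Y : Set X}
    {N₁ N₂ : ℕ} {ε₁ ε₂ : ℝ} (T : Prehistory f₁ → Prehistory f₂) (c : ℝ)
    (hsh : ∀ C : Prehistory f₁, C.shadow ε₁ ⊆ (T C).shadow ε₂)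
    (hlen : ∀ C : Prehistory f₁, N₁ ≤ C.len → N₂ ≤ (T C).len)
    (hw : ∀ C : Prehistory f₁,
      -lam₂ * ((T C).len : ℝ) + (T C).consSum φ₂
        ≤ c + (-lam₁ * (C.len : ℝ) + C.consSum φ₁))
    (h0 : invM f₁ lam₁ φ₁ Y N₁ ε₁ = 0) :
    invM f₂ lam₂ φ₂ Y N₂ ε₂ = 0 := by
  refine le_antisymm ?_ zero_le
  refine ENNReal.le_of_forall_pos_le_add fun η hη _ => ?_
  rw [zero_add]
  set e := ENNReal.ofReal (Real.exp c) with he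
  have he0 : e ≠ 0 := by
    rw [he]
    simp [Real.exp_pos c]
  have heT : e ≠ ⊤ := ENNReal.ofReal_ne_top
  have hb : (0:ℝ≥0∞) < ↑η / e := ENNReal.div_pos (by exact_mod_cast hη.ne') heT
  have hlt : invM f₁ lam₁ φ₁ Y N₁ ε₁ < ↑η / e := by rw [h0]; exact hb
  rw [invM] at hlt
  obtain ⟨Γ, hΓ⟩ := iInf_lt_iff.mp hlt
  have hP : ECovers Γ Y ε₁ ∧ ∀ C ∈ Γ, N₁ ≤ C.len := by
    by_contra hc
    rw [iInf_neg hc] at hΓ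
    exact not_top_lt hΓ
  rw [iInf_pos hP] at hΓ
  have hcov : ECovers (T '' Γ) Y ε₂ ∧ ∀ C ∈ T '' Γ, N₂ ≤ C.len := by
    constructor
    · intro x hx
      obtain ⟨C, hC, hmem⟩ := Set.mem_iUnion₂.mp (hP.1 hx)
      exact Set.mem_biUnion ⟨C, hC, rfl⟩ (hsh C hmem)
    · rintro _ ⟨C, hC, rfl⟩
      exact hlen C (hP.2 C hC)
  have step1 : invM f₂ lam₂ φ₂ Y N₂ ε₂
      ≤ ∑' D : ↥(T '' Γ), ENNReal.ofReal
          (Real.exp (-lam₂ * (D.1.len : ℝ) + D.1.consSum φ₂)) :=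
    iInf₂_le (T '' Γ) hcov
  have hsec : ∀ D : ↥(T '' Γ), ∃ C : ↥Γ, T C.1 = D.1 := by
    rintro ⟨D, C, hC, rfl⟩
    exact ⟨⟨C, hC⟩, rfl⟩
  choose ι hι using hsec
  have hinj : Function.Injective ι := by
    intro D D' hDD'
    apply Subtype.ext
    rw [← hι D, ← hι D', hDD']
  have step2 : (∑' D : ↥(T '' Γ), ENNReal.ofReal
        (Real.exp (-lam₂ * (D.1.len : ℝ) + D.1.consSum φ₂)))
      ≤ ∑' C : ↥Γ, ENNReal.ofReal
        (Real.exp (-lam₂ * ((T C.1).len : ℝ) + (T C.1).consSum φ₂)) := by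
    calc (∑' D : ↥(T '' Γ), ENNReal.ofReal
          (Real.exp (-lam₂ * (D.1.len : ℝ) + D.1.consSum φ₂)))
        = ∑' D : ↥(T '' Γ), ENNReal.ofReal
          (Real.exp (-lam₂ * ((T (ι D).1).len : ℝ) + (T (ι D).1).consSum φ₂)) := by
          apply tsum_congr
          intro D
          rw [hι D]
      _ ≤ _ := ENNReal.tsum_comp_le_tsum_of_injective hinj
          (fun C => ENNReal.ofReal
            (Real.exp (-lam₂ * ((T C.1).len : ℝ) + (T C.1).consSum φ₂)))
  have step3 : (∑' C : ↥Γ, ENNReal.ofReal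
        (Real.exp (-lam₂ * ((T C.1).len : ℝ) + (T C.1).consSum φ₂)))
      ≤ e * ∑' C : ↥Γ, ENNReal.ofReal
        (Real.exp (-lam₁ * (C.1.len : ℝ) + C.1.consSum φ₁)) := by
    rw [← ENNReal.tsum_mul_left]
    apply ENNReal.tsum_le_tsum
    intro C
    rw [he, ← ENNReal.ofReal_mul (le_of_lt (Real.exp_pos c)), ← Real.exp_add]
    exact ENNReal.ofReal_le_ofReal (Real.exp_le_exp.mpr (hw C.1))
  calc invM f₂ lam₂ φ₂ Y N₂ ε₂ ≤ _ := step1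
    _ ≤ _ := step2
    _ ≤ e * ∑' C : ↥Γ, ENNReal.ofReal
        (Real.exp (-lam₁ * (C.1.len : ℝ) + C.1.consSum φ₁)) := step3
    _ ≤ e * (↑η / e) := mul_le_mul_right hΓ.le e
    _ = ↑η := ENNReal.mul_div_cancel he0 heT

lemma unif_delta [CompactSpace X] {f : X → X} (hf : Continuous f) (n : ℕ) {ε : ℝ}
    (hε : 0 < ε) :
    ∃ δ : ℝ, 0 < δ ∧ δ ≤ ε ∧
      ∀ j ≤ n, ∀ a b : X, dist a b < δ → dist (f^[j] a) (f^[j] b) < ε := by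
  induction n with
  | zero =>
    refine ⟨ε, hε, le_refl _, ?_⟩
    intro j hj a b h
    interval_cases j
    simpa using h
  | succ n ih =>
    obtain ⟨δ, hδ0, hδε, hδ⟩ := ih
    have hc : UniformContinuous (f^[n+1]) :=
      CompactSpace.uniformContinuous_of_continuous (hf.iterate (n+1))
    rw [Metric.uniformContinuous_iff] at hc
    obtain ⟨δ', hδ'0, hδ'⟩ := hc ε hε
    refine ⟨min δ δ', lt_min hδ0 hδ'0, le_trans (min_le_left _ _) hδε, ?_⟩
    intro j hj a b hab
    rcases Nat.lt_succ_iff_lt_or_eq.mp (Nat.lt_succ_of_le hj) with hl | rfl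
    · exact hδ j (by omega) a b (lt_of_lt_of_le hab (min_le_left _ _))
    · exact hδ' (lt_of_lt_of_le hab (min_le_right _ _))

end Transfer

section ERealIso

lemma ereal_inv_mul_cancel {c : ℝ} (hc : 0 < c) (x : EReal) :
    ((c⁻¹ : ℝ) : EReal) * (((c : ℝ) : EReal) * x) = x := by
  induction x using EReal.rec with
  | bot =>
    rw [EReal.mul_bot_of_pos (by exact_mod_cast hc),
      EReal.mul_bot_of_pos (by exact_mod_cast inv_pos.mpr hc)]
  | coe a => rw [← EReal.coe_mul, ← EReal.coe_mul, inv_mul_cancel_left₀ hc.ne']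
  | top =>
    rw [EReal.mul_top_of_pos (by exact_mod_cast hc),
      EReal.mul_top_of_pos (by exact_mod_cast inv_pos.mpr hc)]

/-- Multiplication by a positive real as an order isomorphism of `EReal`. -/
noncomputable def erealMulIso (c : ℝ) (hc : 0 < c) : EReal ≃o EReal where
  toFun x := ((c : ℝ) : EReal) * x
  invFun x := ((c⁻¹ : ℝ) : EReal) * x
  left_inv x := ereal_inv_mul_cancel hc x
  right_inv x := by
    have h := ereal_inv_mul_cancel (inv_pos.mpr hc) x
    rwa [inv_inv] at h
  map_rel_iff' := by
    intro a b
    simp only [Equiv.coe_fn_mk]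
    constructor
    · intro h
      have h2 := mul_le_mul_of_nonneg_left h
        (show (0:EReal) ≤ ((c⁻¹ : ℝ) : EReal) by exact_mod_cast (inv_pos.mpr hc).le)
      rwa [ereal_inv_mul_cancel hc, ereal_inv_mul_cancel hc] at h2
    · intro h
      exact mul_le_mul_of_nonneg_left h
        (show (0:EReal) ≤ ((c : ℝ) : EReal) by exact_mod_cast hc.le)

end ERealIso

theorem stmt14 [CompactSpace X] (f : X → X) (hf : Continuous f) (hfs : Surjective f)
    (φ : X → ℝ) (hφ : Continuous φ) (hneg : ∀ x : X, φ x < 0)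
    (t : ℝ) (n : ℕ) (hn : 1 ≤ n) :
    invPress (f^[n]) (fun x => t * birkhoff f φ n x) Set.univ =
      ((n : ℝ) : EReal) * invPress f (fun x => t * φ x) Set.univ := by
  have hn0 : 0 < n := hn
  have hnR : (0:ℝ) < (n:ℝ) := by exact_mod_cast hn0
  obtain ⟨M0, hM0'⟩ := isCompact_univ.exists_bound_of_continuousOn hφ.continuousOn
  set M := max M0 0 with hMdef
  have hM0 : (0:ℝ) ≤ M := le_max_right _ _
  have hM : ∀ x : X, |φ x| ≤ M := by
    intro x
    have h := hM0' x (Set.mem_univ x)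
    rw [Real.norm_eq_abs] at h
    exact le_trans h (le_max_left _ _)
  set K := |t| * ((n:ℝ)+1) * M with hK
  -- Direction 1 : from f to f^[n]
  have dir1 : ∀ (ε μ : ℝ), invMLim f μ (fun x => t * φ x) Set.univ ε = 0 →
      invMLim (f^[n]) ((n:ℝ)*μ) (fun x => t * birkhoff f φ n x) Set.univ ε = 0 := by
    intro ε μ h
    rw [invMLim, ENNReal.iSup_eq_zero] at h ⊢
    intro N₀
    have hmle : ∀ D : Prehistory f, n * (D.len / n) ≤ D.len := by
      intro D
      calc n * (D.len / n) = D.len / n * n := Nat.mul_comm _ _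
        _ ≤ D.len := Nat.div_mul_le_self _ _
    refine invM_transfer (T := fun D => D.compress n (D.len / n) (hmle D))
      (c := 2*K + |μ| * (n:ℝ)) ?_ ?_ ?_ (h (n * N₀))
    · exact fun D => shadow_compress D (hmle D)
    · intro D hD
      show N₀ ≤ D.len / n
      rw [Nat.le_div_iff_mul_le hn0]
      calc N₀ * n = n * N₀ := Nat.mul_comm _ _
        _ ≤ D.len := hD
    · intro D
      set m := D.len / n with hmdef
      have hm : n * m ≤ D.len := hmle D
      have hmlt : D.len ≤ n * m + n := by
        have h1 : n * m + D.len % n = D.len := by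
          rw [hmdef]; exact Nat.div_add_mod D.len n
        have h2 : D.len % n < n := Nat.mod_lt _ hn0
        omega
      have hsum := consSum_compress_le hn0 D hm hmlt t φ hM0 hM
      show -((n:ℝ)*μ) * (m : ℝ)
            + (D.compress n m hm).consSum (fun x => t * birkhoff f φ n x)
          ≤ (2*K + |μ| * (n:ℝ))
            + (-μ * (D.len : ℝ) + D.consSum (fun x => t * φ x))
      have hc1 : (n:ℝ) * (m:ℝ) ≤ (D.len : ℝ) := by exact_mod_cast hm
      have hc2 : (D.len:ℝ) ≤ (n:ℝ)*(m:ℝ) + (n:ℝ) := by exact_mod_cast hmlt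
      have habs : -((n:ℝ)*μ) * (m:ℝ) + μ * (D.len:ℝ) ≤ |μ| * (n:ℝ) := by
        have h1 : -((n:ℝ)*μ) * (m:ℝ) + μ * (D.len:ℝ)
            = μ * ((D.len:ℝ) - (n:ℝ)*(m:ℝ)) := by ring
        rw [h1]
        calc μ * ((D.len:ℝ) - (n:ℝ)*(m:ℝ))
            ≤ |μ * ((D.len:ℝ) - (n:ℝ)*(m:ℝ))| := le_abs_self _
          _ = |μ| * |(D.len:ℝ) - (n:ℝ)*(m:ℝ)| := abs_mul _ _
          _ ≤ |μ| * (n:ℝ) := by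
            apply mul_le_mul_of_nonneg_left _ (abs_nonneg μ)
            rw [abs_of_nonneg (by linarith)]
            linarith
      linarith
  -- Direction 2 : from f^[n] to f
  have dir2 : ∀ (ε δ : ℝ),
      (∀ j ≤ n, ∀ a b : X, dist a b < δ → dist (f^[j] a) (f^[j] b) < ε) →
      ∀ lam : ℝ, invMLim (f^[n]) lam (fun x => t * birkhoff f φ n x) Set.univ δ = 0 →
      invMLim f ((n:ℝ)⁻¹ * lam) (fun x => t * φ x) Set.univ ε = 0 := by
    intro ε δ hδ lam h
    rw [invMLim, ENNReal.iSup_eq_zero] at h ⊢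
    intro N₀
    refine invM_transfer (T := fun C => C.expand n hn0) (c := K) ?_ ?_ ?_ (h N₀)
    · exact fun C => shadow_expand hn0 C hδ
    · intro C hC
      show N₀ ≤ n * C.len
      calc N₀ ≤ C.len := hC
        _ ≤ n * C.len := Nat.le_mul_of_pos_left _ hn0
    · intro C
      have hb := consSum_expand_bound hn0 C t φ hM0 hM
      rw [abs_le] at hb
      show -((n:ℝ)⁻¹ * lam) * ((n * C.len : ℕ) : ℝ)
            + (C.expand n hn0).consSum (fun x => t * φ x)
          ≤ K + (-lam * (C.len : ℝ) + C.consSum (fun x => t * birkhoff f φ n x))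
      have heq : -((n:ℝ)⁻¹ * lam) * ((n * C.len : ℕ) : ℝ)
          = -(lam * ((C.len : ℕ):ℝ)) := by
        push_cast
        field_simp
      linarith [hb.1, hb.2, heq.le, heq.ge]
  -- Assembly via the order isomorphism given by multiplication by `n`.
  set iso := erealMulIso (n:ℝ) hnR with hiso
  have hisofun : ∀ x : EReal, iso x = ((n:ℝ):EReal) * x := fun _ => rfl
  have hisosymm : ∀ x : EReal, iso.symm x = (((n:ℝ)⁻¹ : ℝ):EReal) * x := fun _ => rfl
  apply le_antisymm
  · show invPress (f^[n]) (fun x => t * birkhoff f φ n x) Set.univ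
      ≤ iso (invPress f (fun x => t * φ x) Set.univ)
    apply iSup₂_le
    intro ε hε
    have hsub : iso '' {l : EReal | ∃ lam : ℝ, l = (lam : EReal) ∧
          invMLim f lam (fun x => t * φ x) Set.univ ε = 0}
        ⊆ {l : EReal | ∃ lam : ℝ, l = (lam : EReal) ∧
          invMLim (f^[n]) lam (fun x => t * birkhoff f φ n x) Set.univ ε = 0} := by
      rintro l ⟨l', ⟨μ, rfl, hμ⟩, rfl⟩
      refine ⟨(n:ℝ)*μ, ?_, dir1 ε μ hμ⟩
      rw [hisofun]
      exact (EReal.coe_mul _ _).symm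
    calc invPressEps (f^[n]) (fun x => t * birkhoff f φ n x) Set.univ ε
        ≤ sInf (iso '' {l : EReal | ∃ lam : ℝ, l = (lam : EReal) ∧
            invMLim f lam (fun x => t * φ x) Set.univ ε = 0}) := sInf_le_sInf hsub
      _ = iso (invPressEps f (fun x => t * φ x) Set.univ ε) := by
          rw [sInf_image]
          exact (OrderIso.map_sInf iso _).symm
      _ ≤ iso (invPress f (fun x => t * φ x) Set.univ) :=
          iso.monotone (le_iSup₂ (f := fun (ε : ℝ) (_ : 0 < ε) =>
            invPressEps f (fun x => t * φ x) Set.univ ε) ε hε)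
  · show iso (invPress f (fun x => t * φ x) Set.univ)
      ≤ invPress (f^[n]) (fun x => t * birkhoff f φ n x) Set.univ
    rw [← OrderIso.le_symm_apply]
    apply iSup₂_le
    intro ε hε
    obtain ⟨δ, hδ0, hδε, hδ⟩ := unif_delta hf n hε
    have hsub : iso.symm '' {l : EReal | ∃ lam : ℝ, l = (lam : EReal) ∧
          invMLim (f^[n]) lam (fun x => t * birkhoff f φ n x) Set.univ δ = 0}
        ⊆ {l : EReal | ∃ lam : ℝ, l = (lam : EReal) ∧
          invMLim f lam (fun x => t * φ x) Set.univ ε = 0} := by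
      rintro l ⟨l', ⟨lam, rfl, hlam⟩, rfl⟩
      refine ⟨(n:ℝ)⁻¹ * lam, ?_, dir2 ε δ hδ lam hlam⟩
      rw [hisosymm]
      exact (EReal.coe_mul _ _).symm
    calc invPressEps f (fun x => t * φ x) Set.univ ε
        ≤ sInf (iso.symm '' {l : EReal | ∃ lam : ℝ, l = (lam : EReal) ∧
            invMLim (f^[n]) lam (fun x => t * birkhoff f φ n x) Set.univ δ = 0}) :=
          sInf_le_sInf hsub
      _ = iso.symm (invPressEps (f^[n]) (fun x => t * birkhoff f φ n x) Set.univ δ) := by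
          rw [sInf_image]
          exact (OrderIso.map_sInf iso.symm _).symm
      _ ≤ iso.symm (invPress (f^[n]) (fun x => t * birkhoff f φ n x) Set.univ) :=
          iso.symm.monotone (le_iSup₂ (f := fun (ε : ℝ) (_ : 0 < ε) =>
            invPressEps (f^[n]) (fun x => t * birkhoff f φ n x) Set.univ ε) δ hδ0)
end
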